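/- arXiv:1812.01310 — 4 statements merged into one kernel-verified Lean document; each statement's English description precedes it below -/
import Mathlib

section
/- Let 𝔤 be a finite-dimensional real nilpotent Lie algebra that admits a derivation D : 𝔤 → 𝔤 with tr(D) ≠ 0. Then 𝔤 carries no Einstein metric of nonzero scalar curvature: for every metric ⟨·,·⟩ on 𝔤 and every real number λ ≠ 0, the Ricci tensor ric of ⟨·,·⟩ is not equal to λ·⟨·,·⟩. -/
/-- The expression for the Ricci tensor of a metric `B` on a nilpotent Lie algebra,
computed from a basis `v` with metric-dual family `u`. -/
noncomputable def ricci {L : Type} [LieRing L] [LieAlgebra ℝ L] {ι : Type} [Fintype ι]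
    (B : LinearMap.BilinForm ℝ L) (v u : ι → L) (x y : L) : ℝ :=
  -(1 / 2 : ℝ) * ∑ i, B ⁅x, v i⁆ ⁅y, u i⁆
    + (1 / 4 : ℝ) * ∑ i, ∑ j, B ⁅v i, v j⁆ x * B ⁅u i, u j⁆ y

/-- `u` is the metric-dual family of `v` with respect to `B`: `B (v i) (u j) = δ_ij`. -/
def IsDualPair {L : Type} [LieRing L] [LieAlgebra ℝ L] {ι : Type} [Fintype ι]
    [DecidableEq ι] (B : LinearMap.BilinForm ℝ L) (v u : ι → L) : Prop :=
  ∀ i j, B (v i) (u j) = if i = j then (1 : ℝ) else 0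

/-- A nilpotent Lie algebra admitting a derivation of nonzero trace carries no Einstein
metric of nonzero scalar curvature. -/
theorem no_einstein_of_derivation_nonzero_trace {L : Type} [LieRing L] [LieAlgebra ℝ L]
    [FiniteDimensional ℝ L] [LieRing.IsNilpotent L]
    (D : L →ₗ[ℝ] L) (hD : ∀ x y : L, D ⁅x, y⁆ = ⁅D x, y⁆ + ⁅x, D y⁆)
    (htr : LinearMap.trace ℝ L D ≠ 0)
    (B : LinearMap.BilinForm ℝ L)
    (hsymm : ∀ x y, B x y = B y x)
    (hnondeg : ∀ x, (∀ y, B x y = 0) → x = 0)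
    (lam : ℝ) (hlam : lam ≠ 0)
    (ι : Type) [Fintype ι] [DecidableEq ι] (v : Module.Basis ι ℝ L) (u : ι → L)
    (hdual : IsDualPair B (⇑v) u) :
    ¬ ∀ x y, ricci B (⇑v) u x y = lam * B x y := by
  intro h
  have hd : ∀ i j, B (v i) (u j) = if i = j then (1 : ℝ) else 0 := hdual
  -- coefficient lemma: B x (u k) = v.repr x k
  have coeff : ∀ (x : L) (k : ι), B x (u k) = v.repr x k := by
    intro x k
    conv_lhs => rw [← Module.Basis.sum_repr v x]
    simp only [map_sum, map_smul, LinearMap.sum_apply, LinearMap.smul_apply, hd,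
      smul_eq_mul, mul_ite, mul_one, mul_zero, Finset.sum_ite_eq', Finset.mem_univ, if_true]
  have expand_v : ∀ x : L, ∑ k, B x (u k) • v k = x := by
    intro x
    conv_rhs => rw [← Module.Basis.sum_repr v x]
    exact Finset.sum_congr rfl fun k _ => by rw [coeff]
  have hdual' : ∀ i j, B (u i) (v j) = if i = j then (1 : ℝ) else 0 := by
    intro i j
    rw [hsymm, hd]
    simp [eq_comm]
  -- B a b = ∑ k, B a (v k) * B (u k) b
  have hBsum : ∀ a b : L, B a b = ∑ k, B a (v k) * B (u k) b := by
    intro a b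
    conv_lhs => rw [← expand_v b]
    rw [map_sum]
    refine Finset.sum_congr rfl fun k _ => ?_
    rw [map_smul, smul_eq_mul, hsymm b (u k), mul_comm]
  have expand_u : ∀ x : L, ∑ k, B x (v k) • u k = x := by
    intro x
    have hz : ∀ y, B ((∑ k, B x (v k) • u k) - x) y = 0 := by
      intro y
      rw [map_sub, LinearMap.sub_apply, map_sum, LinearMap.sum_apply]
      have : ∑ k, (B (B x (v k) • u k)) y = B x y := by
        rw [hBsum x y]
        exact Finset.sum_congr rfl fun k _ => by
          rw [map_smul, LinearMap.smul_apply, smul_eq_mul]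
      rw [this, sub_self]
    exact sub_eq_zero.mp (hnondeg _ hz)
  -- degenerate case: empty index type
  cases isEmpty_or_nonempty ι with
  | inl hempty =>
    apply htr
    rw [LinearMap.trace_eq_matrix_trace ℝ v, Matrix.trace]
    simp
  | inr hne =>
  -- u is a basis
  have hcard : Fintype.card ι = Module.finrank ℝ L := (Module.finrank_eq_card_basis v).symm
  have hli : LinearIndependent ℝ u := by
    rw [Fintype.linearIndependent_iff]
    intro g hg i
    have h2 := congrArg (fun z => B (v i) z) hg
    simpa [map_sum, map_smul, hd, mul_ite, Finset.sum_ite_eq'] using h2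
  set bu := basisOfLinearIndependentOfCardEqFinrank hli hcard with hbu_def
  have hbu : ⇑bu = u := coe_basisOfLinearIndependentOfCardEqFinrank hli hcard
  have coeff_u : ∀ (x : L) (k : ι), B x (v k) = bu.repr x k := by
    intro x k
    conv_lhs => rw [← Module.Basis.sum_repr bu x]
    simp only [hbu, map_sum, map_smul, LinearMap.sum_apply, LinearMap.smul_apply, hdual',
      smul_eq_mul, mul_ite, mul_one, mul_zero, Finset.sum_ite_eq', Finset.mem_univ, if_true]
  -- trace formulas
  have tr_v : LinearMap.trace ℝ L D = ∑ k, B (D (v k)) (u k) := by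
    rw [LinearMap.trace_eq_matrix_trace ℝ v, Matrix.trace]
    exact Finset.sum_congr rfl fun k _ => by
      simp [Matrix.diag, LinearMap.toMatrix_apply, coeff]
  have tr_u : LinearMap.trace ℝ L D = ∑ k, B (v k) (D (u k)) := by
    rw [LinearMap.trace_eq_matrix_trace ℝ bu, Matrix.trace]
    refine Finset.sum_congr rfl fun k _ => ?_
    simp only [Matrix.diag, LinearMap.toMatrix_apply, hbu]
    rw [← coeff_u, hsymm]
  -- key inner-sum identities
  have keyT1 : ∀ i j : ι, ∑ k, B ⁅v i, v j⁆ (D (v k)) * B ⁅u i, u j⁆ (u k)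
      = B ⁅v i, v j⁆ (D ⁅u i, u j⁆) := by
    intro i j
    conv_rhs => rw [← expand_v ⁅u i, u j⁆]
    rw [map_sum, map_sum]
    exact Finset.sum_congr rfl fun k _ => by rw [map_smul, map_smul, smul_eq_mul, mul_comm]
  have keyT2 : ∀ i j : ι, ∑ k, B ⁅v i, v j⁆ (v k) * B ⁅u i, u j⁆ (D (u k))
      = B ⁅u i, u j⁆ (D ⁅v i, v j⁆) := by
    intro i j
    conv_rhs => rw [← expand_u ⁅v i, v j⁆]
    rw [map_sum, map_sum]
    exact Finset.sum_congr rfl fun k _ => by rw [map_smul, map_smul, smul_eq_mul]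
  -- total T sums
  have hT1tot : ∑ k, ∑ i, ∑ j, B ⁅v i, v j⁆ (D (v k)) * B ⁅u i, u j⁆ (u k)
      = 2 * ∑ k, ∑ i, B ⁅v k, v i⁆ ⁅D (u k), u i⁆ := by
    calc ∑ k, ∑ i, ∑ j, B ⁅v i, v j⁆ (D (v k)) * B ⁅u i, u j⁆ (u k)
        = ∑ i, ∑ j, ∑ k, B ⁅v i, v j⁆ (D (v k)) * B ⁅u i, u j⁆ (u k) := by
          rw [Finset.sum_comm]
          exact Finset.sum_congr rfl fun i _ => Finset.sum_comm
      _ = ∑ i, ∑ j, B ⁅v i, v j⁆ (D ⁅u i, u j⁆) :=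
          Finset.sum_congr rfl fun i _ => Finset.sum_congr rfl fun j _ => keyT1 i j
      _ = ∑ i, ∑ j, (B ⁅v i, v j⁆ ⁅D (u i), u j⁆ + B ⁅v i, v j⁆ ⁅u i, D (u j)⁆) :=
          Finset.sum_congr rfl fun i _ => Finset.sum_congr rfl fun j _ => by rw [hD, map_add]
      _ = (∑ i, ∑ j, B ⁅v i, v j⁆ ⁅D (u i), u j⁆)
            + ∑ i, ∑ j, B ⁅v i, v j⁆ ⁅u i, D (u j)⁆ := by
          simp [Finset.sum_add_distrib]
      _ = 2 * ∑ k, ∑ i, B ⁅v k, v i⁆ ⁅D (u k), u i⁆ := by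
          have hsw : ∑ i, ∑ j, B ⁅v i, v j⁆ ⁅u i, D (u j)⁆
              = ∑ i, ∑ j, B ⁅v i, v j⁆ ⁅D (u i), u j⁆ := by
            rw [Finset.sum_comm]
            refine Finset.sum_congr rfl fun i _ => Finset.sum_congr rfl fun j _ => ?_
            rw [← lie_skew (v j) (v i), ← lie_skew (u j) (D (u i))]
            simp only [map_neg, LinearMap.neg_apply, neg_neg]
          rw [hsw]; ring
  have hT2tot : ∑ k, ∑ i, ∑ j, B ⁅v i, v j⁆ (v k) * B ⁅u i, u j⁆ (D (u k))
      = 2 * ∑ k, ∑ i, B ⁅D (v k), v i⁆ ⁅u k, u i⁆ := by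
    calc ∑ k, ∑ i, ∑ j, B ⁅v i, v j⁆ (v k) * B ⁅u i, u j⁆ (D (u k))
        = ∑ i, ∑ j, ∑ k, B ⁅v i, v j⁆ (v k) * B ⁅u i, u j⁆ (D (u k)) := by
          rw [Finset.sum_comm]
          exact Finset.sum_congr rfl fun i _ => Finset.sum_comm
      _ = ∑ i, ∑ j, B ⁅u i, u j⁆ (D ⁅v i, v j⁆) :=
          Finset.sum_congr rfl fun i _ => Finset.sum_congr rfl fun j _ => keyT2 i j
      _ = ∑ i, ∑ j, (B ⁅D (v i), v j⁆ ⁅u i, u j⁆ + B ⁅u i, u j⁆ ⁅v i, D (v j)⁆) :=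
          Finset.sum_congr rfl fun i _ => Finset.sum_congr rfl fun j _ => by
            rw [hD, map_add, hsymm ⁅u i, u j⁆ ⁅D (v i), v j⁆]
      _ = (∑ i, ∑ j, B ⁅D (v i), v j⁆ ⁅u i, u j⁆)
            + ∑ i, ∑ j, B ⁅u i, u j⁆ ⁅v i, D (v j)⁆ := by
          simp [Finset.sum_add_distrib]
      _ = 2 * ∑ k, ∑ i, B ⁅D (v k), v i⁆ ⁅u k, u i⁆ := by
          have hsw : ∑ i, ∑ j, B ⁅u i, u j⁆ ⁅v i, D (v j)⁆
              = ∑ i, ∑ j, B ⁅D (v i), v j⁆ ⁅u i, u j⁆ := by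
            rw [Finset.sum_comm]
            refine Finset.sum_congr rfl fun i _ => Finset.sum_congr rfl fun j _ => ?_
            rw [← lie_skew (u j) (u i), ← lie_skew (v j) (D (v i))]
            simp only [map_neg, LinearMap.neg_apply, neg_neg]
            exact (hsymm _ _).symm
          rw [hsw]; ring
  -- the Einstein condition yields 2·lam·tr D
  have hsumE : ∑ k, (ricci B (⇑v) u (D (v k)) (u k) + ricci B (⇑v) u (v k) (D (u k)))
      = 2 * lam * LinearMap.trace ℝ L D := by
    have : ∀ k : ι, ricci B (⇑v) u (D (v k)) (u k) + ricci B (⇑v) u (v k) (D (u k))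
        = lam * B (D (v k)) (u k) + lam * B (v k) (D (u k)) := fun k => by rw [h, h]
    rw [Finset.sum_congr rfl fun k _ => this k, Finset.sum_add_distrib,
      ← Finset.mul_sum, ← Finset.mul_sum, ← tr_v, ← tr_u]
    ring
  -- the derivation computation yields 0
  have hsum0 : ∑ k, (ricci B (⇑v) u (D (v k)) (u k) + ricci B (⇑v) u (v k) (D (u k)))
      = 0 := by
    simp only [ricci]
    rw [Finset.sum_add_distrib, Finset.sum_add_distrib, Finset.sum_add_distrib,
      ← Finset.mul_sum, ← Finset.mul_sum, ← Finset.mul_sum, ← Finset.mul_sum,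
      hT1tot, hT2tot]
    ring
  have h2 : 2 * lam * LinearMap.trace ℝ L D = 0 := hsumE.symm.trans hsum0
  apply htr
  rcases mul_eq_zero.mp h2 with h3 | h3
  · rcases mul_eq_zero.mp h3 with h4 | h4
    · norm_num at h4
    · exact absurd h4 hlam
  · exact h3
end

section
/- Let 𝔤 be the 6-dimensional real nilpotent Lie algebra with basis e_1,…,e_6 whose only nonzero brackets among basis vectors are [e_1,e_2] = e_4, [e_1,e_3] = e_5, [e_2,e_5] = e_6, [e_3,e_4] = e_6 (this bracket satisfies the Jacobi identity). Then for all nonzero real numbers g_1, g_2, g_3, x, the diagonal metric with diagonal entries (g_1, g_2, g_3, x·g_1·g_2, −x·g_1·g_3, x²·g_1·g_2·g_3) is Ricci-flat. In particular, 𝔤 admits a Ricci-flat metric of every signature (p,q) with p + q = 6 and p, q ≥ 1. -/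
/-- `B` is Ricci-flat: the Ricci tensor vanishes (computed from any basis and
metric-dual family). -/
def RicciFlat {L : Type} [LieRing L] [LieAlgebra ℝ L]
    (B : LinearMap.BilinForm ℝ L) : Prop :=
  ∀ (ι : Type) [Fintype ι] [DecidableEq ι] (v : Module.Basis ι ℝ L) (u : ι → L),
    IsDualPair B (⇑v) u → ∀ x y, ricci B (⇑v) u x y = 0

/-- `B` has signature `(p, q)`: `p` and `q` are the dimensions of maximal positive- and
negative-definite subspaces. -/
def IsSignature {L : Type} [AddCommGroup L] [Module ℝ L]
    (B : LinearMap.BilinForm ℝ L) (p q : ℕ) : Prop :=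
  ((∃ P : Submodule ℝ L, Module.finrank ℝ P = p ∧ ∀ x ∈ P, x ≠ 0 → 0 < B x x) ∧
    ∀ P : Submodule ℝ L, (∀ x ∈ P, x ≠ 0 → 0 < B x x) → Module.finrank ℝ P ≤ p) ∧
  ((∃ N : Submodule ℝ L, Module.finrank ℝ N = q ∧ ∀ x ∈ N, x ≠ 0 → B x x < 0) ∧
    ∀ N : Submodule ℝ L, (∀ x ∈ N, x ≠ 0 → B x x < 0) → Module.finrank ℝ N ≤ q)

section Aux
variable {L : Type} [LieRing L] [LieAlgebra ℝ L]

/-- expansion of any vector in terms of the dual family of a basis -/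
lemma dual_expand {ι' : Type} [Fintype ι'] [DecidableEq ι'] [Nonempty ι']
    (B : LinearMap.BilinForm ℝ L) (v' : Module.Basis ι' ℝ L) (u' : ι' → L)
    (h' : IsDualPair B (⇑v') u') (z : L) :
    z = ∑ k, B (v' k) z • u' k := by
  have hfd : FiniteDimensional ℝ L := Module.Basis.finiteDimensional_of_finite v'
  have hcard : Fintype.card ι' = Module.finrank ℝ L :=
    (Module.finrank_eq_card_basis v').symm
  have h'' : ∀ i j, (B (v' i)) (u' j) = if i = j then (1:ℝ) else 0 := h'
  have hli : LinearIndependent ℝ u' := by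
    rw [Fintype.linearIndependent_iff]
    intro c hc m
    have h2 := congrArg (fun w => B (v' m) w) hc
    simpa [map_sum, map_smul, h'', smul_eq_mul, mul_ite, Finset.sum_ite_eq] using h2
  let ub : Module.Basis ι' ℝ L := basisOfLinearIndependentOfCardEqFinrank hli hcard
  have hub : ⇑ub = u' := coe_basisOfLinearIndependentOfCardEqFinrank hli hcard
  have hz : z = ∑ k, ub.repr z k • u' k := by
    conv_lhs => rw [← ub.sum_repr z]
    simp [hub]
  have hcoef : ∀ m, B (v' m) z = ub.repr z m := by
    intro m
    conv_lhs => rw [hz]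
    simp [map_sum, map_smul, h'', smul_eq_mul, mul_ite, Finset.sum_ite_eq]
  calc z = ∑ k, ub.repr z k • u' k := hz
    _ = ∑ k, B (v' k) z • u' k := Finset.sum_congr rfl fun k _ => by rw [hcoef]

lemma key_matrix {ι ι' : Type} [Fintype ι] [Fintype ι'] [DecidableEq ι] [DecidableEq ι']
    (B : LinearMap.BilinForm ℝ L) (v : Module.Basis ι ℝ L) (u : ι → L)
    (h : IsDualPair B (⇑v) u) (v' : Module.Basis ι' ℝ L) (u' : ι' → L)
    (h' : IsDualPair B (⇑v') u') (k l : ι') :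
    ∑ i, v'.repr (v i) k * B (v' l) (u i) = if k = l then 1 else 0 := by
  classical
  have hfd : FiniteDimensional ℝ L := Module.Basis.finiteDimensional_of_finite v'
  let A : Matrix ι ι' ℝ := fun i k => v'.repr (v i) k
  let M : Matrix ι' ι ℝ := fun l i => B (v' l) (u i)
  have hAM : A * M = 1 := by
    ext i j
    have h1 : B (v i) (u j) = ∑ k, v'.repr (v i) k * B (v' k) (u j) := by
      conv_lhs => rw [show (v i : L) = ∑ k, v'.repr (v i) k • v' k from (v'.sum_repr (v i)).symm]
      simp only [map_sum, LinearMap.sum_apply, map_smul, LinearMap.smul_apply, smul_eq_mul]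
    have h2 := h i j
    rw [h1] at h2
    rw [Matrix.mul_apply, Matrix.one_apply]; exact h2
  have hcard : Fintype.card ι = Fintype.card ι' := by
    rw [← Module.finrank_eq_card_basis v, ← Module.finrank_eq_card_basis v']
  have hMA : M * A = 1 := Matrix.mul_eq_one_comm_of_equiv (Fintype.equivOfCardEq hcard) |>.mp hAM
  have := congrFun (congrFun hMA l) k
  rw [Matrix.mul_apply, Matrix.one_apply] at this; simp only [A, M] at this
  have h3 : ∑ i, (v'.repr (v i)) k * (B (v' l)) (u i)
      = ∑ j, (B (v' l)) (u j) * (v'.repr (v j)) k :=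
    Finset.sum_congr rfl fun i _ => mul_comm _ _
  rw [h3, this]
  rcases eq_or_ne k l with rfl | hne
  · simp
  · simp [hne, hne.symm]

/-- the trace-like sum over a dual pair does not depend on the pair -/
lemma sum_dualPair_eq {ι ι' : Type} [Fintype ι] [Fintype ι'] [DecidableEq ι] [DecidableEq ι']
    [Nonempty ι']
    (B : LinearMap.BilinForm ℝ L) (v : Module.Basis ι ℝ L) (u : ι → L)
    (h : IsDualPair B (⇑v) u) (v' : Module.Basis ι' ℝ L) (u' : ι' → L)
    (h' : IsDualPair B (⇑v') u') (F : L →ₗ[ℝ] L →ₗ[ℝ] ℝ) :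
    ∑ i, F (v i) (u i) = ∑ k, F (v' k) (u' k) := by
  classical
  have step : ∀ i, F (v i) (u i)
      = ∑ k, ∑ l, v'.repr (v i) k * B (v' l) (u i) * F (v' k) (u' l) := by
    intro i
    conv_lhs =>
      rw [show (v i : L) = ∑ k, v'.repr (v i) k • v' k from (v'.sum_repr (v i)).symm,
        show (u i : L) = ∑ l, B (v' l) (u i) • u' l from dual_expand B v' u' h' (u i)]
    simp only [map_sum, LinearMap.sum_apply, map_smul, LinearMap.smul_apply, smul_eq_mul,
      Finset.mul_sum]
    rw [Finset.sum_comm]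
    exact Finset.sum_congr rfl fun k _ => Finset.sum_congr rfl fun l _ => by ring
  calc ∑ i, F (v i) (u i)
      = ∑ i, ∑ k, ∑ l, v'.repr (v i) k * B (v' l) (u i) * F (v' k) (u' l) :=
        Finset.sum_congr rfl fun i _ => step i
    _ = ∑ k, ∑ l, (∑ i, v'.repr (v i) k * B (v' l) (u i)) * F (v' k) (u' l) := by
        rw [Finset.sum_comm]
        refine Finset.sum_congr rfl fun k _ => ?_
        rw [Finset.sum_comm]
        refine Finset.sum_congr rfl fun l _ => ?_
        rw [Finset.sum_mul]
    _ = ∑ k, F (v' k) (u' k) := by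
        refine Finset.sum_congr rfl fun k _ => ?_
        simp [key_matrix B v u h v' u' h', ite_mul, Finset.sum_ite_eq]
end Aux

section Aux2
variable {L : Type} [LieRing L] [LieAlgebra ℝ L]

lemma ricci_eq_of_dualPair {ι ι' : Type} [Fintype ι] [Fintype ι']
    [DecidableEq ι] [DecidableEq ι'] [Nonempty ι']
    (B : LinearMap.BilinForm ℝ L) (v : Module.Basis ι ℝ L) (u : ι → L)
    (h : IsDualPair B (⇑v) u) (v' : Module.Basis ι' ℝ L) (u' : ι' → L)
    (h' : IsDualPair B (⇑v') u') (x y : L) :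
    ricci B (⇑v) u x y = ricci B (⇑v') u' x y := by
  classical
  have h1 : ∑ i, B ⁅x, v i⁆ ⁅y, u i⁆ = ∑ k, B ⁅x, v' k⁆ ⁅y, u' k⁆ := by
    simpa [LinearMap.mk₂_apply] using sum_dualPair_eq B v u h v' u' h'
      (LinearMap.mk₂ ℝ (fun a b => B ⁅x, a⁆ ⁅y, b⁆)
        (fun a a' b => by simp [lie_add, map_add, LinearMap.add_apply])
        (fun c a b => by simp [lie_smul, map_smul, LinearMap.smul_apply])
        (fun a b b' => by simp [lie_add, map_add])
        (fun c a b => by simp [lie_smul, map_smul]))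
  have h2 : ∑ i, ∑ j, B ⁅v i, v j⁆ x * B ⁅u i, u j⁆ y
      = ∑ k, ∑ l, B ⁅v' k, v' l⁆ x * B ⁅u' k, u' l⁆ y := by
    have hinner : ∀ w z : L, ∑ j, B ⁅w, v j⁆ x * B ⁅z, u j⁆ y
        = ∑ l, B ⁅w, v' l⁆ x * B ⁅z, u' l⁆ y := by
      intro w z
      simpa [LinearMap.mk₂_apply] using sum_dualPair_eq B v u h v' u' h'
        (LinearMap.mk₂ ℝ (fun c d => B ⁅w, c⁆ x * B ⁅z, d⁆ y)
          (fun a a' b => by simp [lie_add, map_add, LinearMap.add_apply, add_mul])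
          (fun c a b => by simp [lie_smul, map_smul, LinearMap.smul_apply, smul_eq_mul, mul_assoc])
          (fun a b b' => by simp [lie_add, map_add, LinearMap.add_apply, mul_add])
          (fun c a b => by simp [lie_smul, map_smul, LinearMap.smul_apply, smul_eq_mul]; ring))
    have houter : ∀ l : ι', ∑ i, B ⁅v i, v' l⁆ x * B ⁅u i, u' l⁆ y
        = ∑ k, B ⁅v' k, v' l⁆ x * B ⁅u' k, u' l⁆ y := by
      intro l
      simpa [LinearMap.mk₂_apply] using sum_dualPair_eq B v u h v' u' h'
        (LinearMap.mk₂ ℝ (fun c d => B ⁅c, v' l⁆ x * B ⁅d, u' l⁆ y)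
          (fun a a' b => by simp [add_lie, map_add, LinearMap.add_apply, add_mul])
          (fun c a b => by simp [smul_lie, map_smul, LinearMap.smul_apply, smul_eq_mul, mul_assoc])
          (fun a b b' => by simp [add_lie, map_add, LinearMap.add_apply, mul_add])
          (fun c a b => by simp [smul_lie, map_smul, LinearMap.smul_apply, smul_eq_mul]; ring))
    calc ∑ i, ∑ j, B ⁅v i, v j⁆ x * B ⁅u i, u j⁆ y
        = ∑ i, ∑ l, B ⁅v i, v' l⁆ x * B ⁅u i, u' l⁆ y :=
          Finset.sum_congr rfl fun i _ => hinner (v i) (u i)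
      _ = ∑ l, ∑ i, B ⁅v i, v' l⁆ x * B ⁅u i, u' l⁆ y := Finset.sum_comm
      _ = ∑ l, ∑ k, B ⁅v' k, v' l⁆ x * B ⁅u' k, u' l⁆ y :=
          Finset.sum_congr rfl fun l _ => houter l
      _ = ∑ k, ∑ l, B ⁅v' k, v' l⁆ x * B ⁅u' k, u' l⁆ y := Finset.sum_comm
  unfold ricci
  rw [h1, h2]

lemma ricci_add_left {ι : Type} [Fintype ι] (B : LinearMap.BilinForm ℝ L) (v u : ι → L)
    (x x' y : L) : ricci B v u (x + x') y = ricci B v u x y + ricci B v u x' y := by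
  simp only [ricci, add_lie, map_add, LinearMap.add_apply, Finset.sum_add_distrib, add_mul,
    mul_add]
  ring

lemma ricci_smul_left {ι : Type} [Fintype ι] (B : LinearMap.BilinForm ℝ L) (v u : ι → L)
    (c : ℝ) (x y : L) : ricci B v u (c • x) y = c * ricci B v u x y := by
  simp only [ricci, smul_lie, map_smul, LinearMap.smul_apply, smul_eq_mul, mul_left_comm,
    ← Finset.mul_sum]
  try simp only [mul_assoc, ← Finset.mul_sum]
  ring

lemma ricci_add_right {ι : Type} [Fintype ι] (B : LinearMap.BilinForm ℝ L) (v u : ι → L)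
    (x y y' : L) : ricci B v u x (y + y') = ricci B v u x y + ricci B v u x y' := by
  simp only [ricci, add_lie, map_add, LinearMap.add_apply, Finset.sum_add_distrib, add_mul,
    mul_add]
  ring

lemma ricci_smul_right {ι : Type} [Fintype ι] (B : LinearMap.BilinForm ℝ L) (v u : ι → L)
    (c : ℝ) (x y : L) : ricci B v u x (c • y) = c * ricci B v u x y := by
  simp only [ricci, smul_lie, map_smul, LinearMap.smul_apply, smul_eq_mul, mul_left_comm,
    ← Finset.mul_sum]
  try simp only [mul_assoc, ← Finset.mul_sum]
  ring

lemma ricci_eq_zero_of_basis {ι : Type} [Fintype ι] [DecidableEq ι]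
    (B : LinearMap.BilinForm ℝ L) (e : Module.Basis ι ℝ L) (v u : ι → L)
    (h : ∀ p q, ricci B v u (e p) (e q) = 0) (x y : L) : ricci B v u x y = 0 := by
  let R : L →ₗ[ℝ] L →ₗ[ℝ] ℝ := LinearMap.mk₂ ℝ (ricci B v u)
    (ricci_add_left B v u) (fun c m n => by rw [smul_eq_mul]; exact ricci_smul_left B v u c m n)
    (ricci_add_right B v u) (fun c m n => by rw [smul_eq_mul]; exact ricci_smul_right B v u c m n)
  have hR : R = 0 := by
    apply Module.Basis.ext e
    intro p
    apply Module.Basis.ext e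
    intro q
    simpa [R, LinearMap.mk₂_apply] using h p q
  have : R x y = 0 := by rw [hR]; rfl
  simpa [R, LinearMap.mk₂_apply] using this
end Aux2

section Diag
variable {L : Type} [AddCommGroup L] [Module ℝ L]

noncomputable def diagForm (e : Module.Basis (Fin 6) ℝ L) (w : Fin 6 → ℝ) :
    LinearMap.BilinForm ℝ L :=
  LinearMap.mk₂ ℝ (fun a b => ∑ i, w i * e.repr a i * e.repr b i)
    (fun a a' b => by
      simp only [map_add, Finsupp.add_apply]
      rw [← Finset.sum_add_distrib]
      exact Finset.sum_congr rfl fun i _ => by ring)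
    (fun c a b => by
      simp only [map_smul, Finsupp.smul_apply, smul_eq_mul]
      rw [Finset.mul_sum]
      exact Finset.sum_congr rfl fun i _ => by ring)
    (fun a b b' => by
      simp only [map_add, Finsupp.add_apply]
      rw [← Finset.sum_add_distrib]
      exact Finset.sum_congr rfl fun i _ => by ring)
    (fun c a b => by
      simp only [map_smul, Finsupp.smul_apply, smul_eq_mul]
      rw [Finset.mul_sum]
      exact Finset.sum_congr rfl fun i _ => by ring)

lemma diagForm_apply (e : Module.Basis (Fin 6) ℝ L) (w : Fin 6 → ℝ) (a b : L) :
    diagForm e w a b = ∑ i, w i * e.repr a i * e.repr b i := rfl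

lemma diagForm_basis (e : Module.Basis (Fin 6) ℝ L) (w : Fin 6 → ℝ) (i j : Fin 6) :
    diagForm e w (e i) (e j) = if i = j then w i else 0 := by
  classical
  simp only [diagForm_apply, Module.Basis.repr_self, Finsupp.single_apply, mul_ite, ite_mul,
    mul_one, mul_zero, zero_mul]
  rw [Finset.sum_ite_eq]
  rcases eq_or_ne i j with rfl | hne
  · simp
  · simp [hne, hne.symm]

lemma diagForm_comm (e : Module.Basis (Fin 6) ℝ L) (w : Fin 6 → ℝ) (a b : L) :
    diagForm e w a b = diagForm e w b a := by
  simp only [diagForm_apply]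
  exact Finset.sum_congr rfl fun i _ => by ring

lemma diagForm_nondeg (e : Module.Basis (Fin 6) ℝ L) (w : Fin 6 → ℝ) (hw : ∀ i, w i ≠ 0) :
    ∀ a : L, (∀ b, diagForm e w a b = 0) → a = 0 := by
  intro a ha
  have h : ∀ j, e.repr a j = 0 := by
    intro j
    have h2 := ha (e j)
    simp only [diagForm_apply, Module.Basis.repr_self, Finsupp.single_apply, mul_ite,
      mul_one, mul_zero] at h2
    rw [Finset.sum_ite_eq] at h2
    simp only [Finset.mem_univ, if_true] at h2
    rcases mul_eq_zero.mp h2 with h3 | h3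
    · exact absurd h3 (hw j)
    · exact h3
  exact e.ext_elem fun i => by simp [h i]

lemma diagForm_sq (e : Module.Basis (Fin 6) ℝ L) (w : Fin 6 → ℝ) (a : L) :
    diagForm e w a a = ∑ i, w i * (e.repr a i)^2 := by
  simp only [diagForm_apply]
  exact Finset.sum_congr rfl fun i _ => by ring

lemma diagForm_isSignature (e : Module.Basis (Fin 6) ℝ L) (s : Fin 6 → Bool) :
    IsSignature (diagForm e fun i => if s i then 1 else -1)
      (Finset.univ.filter fun i => s i = true).card
      (Finset.univ.filter fun i => ¬ s i = true).card := by
  classical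
  have hfd : FiniteDimensional ℝ L := Module.Basis.finiteDimensional_of_finite e
  set w : Fin 6 → ℝ := fun i => if s i then 1 else -1 with hwdef
  have hrank : Module.finrank ℝ L = 6 := by
    rw [Module.finrank_eq_card_basis e]; simp
  have span_rank : ∀ t : Finset (Fin 6),
      Module.finrank ℝ (Submodule.span ℝ (e '' ↑t)) = t.card := by
    intro t
    have hli : LinearIndependent ℝ (fun i : {x // x ∈ t} => e ↑i) :=
      e.linearIndependent.comp _ Subtype.val_injective
    have himg : e '' ↑t = Set.range (fun i : {x // x ∈ t} => e ↑i) := by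
      ext z
      simp [Set.mem_image, Set.mem_range, Subtype.exists]
    rw [himg, finrank_span_eq_card hli, Fintype.card_coe]
  have mem_span_coord : ∀ (t : Finset (Fin 6)) (a : L),
      a ∈ Submodule.span ℝ (e '' ↑t) → ∀ i ∉ t, e.repr a i = 0 := by
    intro t a ha i hi
    have hsupp := (Module.Basis.mem_span_image (b := e)).mp ha
    by_contra hne
    exact hi (hsupp (Finsupp.mem_support_iff.mpr hne))
  set tpos : Finset (Fin 6) := Finset.univ.filter fun i => s i = true with htpos
  set tneg : Finset (Fin 6) := Finset.univ.filter fun i => ¬ s i = true with htneg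
  have hcards : tpos.card + tneg.card = 6 := by
    rw [htpos, htneg, Finset.card_filter_add_card_filter_not]; simp
  -- positivity on the span of the positive part
  have pos_def : ∀ a ∈ Submodule.span ℝ (e '' ↑tpos), a ≠ 0 → 0 < diagForm e w a a := by
    intro a ha hane
    rw [diagForm_sq]
    have hz : ∀ i ∉ tpos, e.repr a i = 0 := mem_span_coord tpos a ha
    have hnonneg : ∀ i ∈ Finset.univ, 0 ≤ w i * (e.repr a i)^2 := by
      intro i _
      by_cases hi : i ∈ tpos
      · have : s i = true := by simpa [htpos] using hi
        simp [hwdef, this]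
        positivity
      · simp [hz i hi]
    have hex : ∃ i ∈ Finset.univ, 0 < w i * (e.repr a i)^2 := by
      have : ∃ i, e.repr a i ≠ 0 := by
        by_contra hno
        push_neg at hno
        exact hane (e.ext_elem fun i => by simp [hno i])
      obtain ⟨i, hi⟩ := this
      have hit : i ∈ tpos := by
        by_contra hc
        exact hi (hz i hc)
      have hsi : s i = true := by simpa [htpos] using hit
      refine ⟨i, Finset.mem_univ i, ?_⟩
      simp [hwdef, hsi]
      positivity
    exact Finset.sum_pos' hnonneg hex
  have neg_def : ∀ a ∈ Submodule.span ℝ (e '' ↑tneg), a ≠ 0 → diagForm e w a a < 0 := by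
    intro a ha hane
    rw [diagForm_sq]
    have hz : ∀ i ∉ tneg, e.repr a i = 0 := mem_span_coord tneg a ha
    have hnonpos : ∀ i ∈ Finset.univ, w i * (e.repr a i)^2 ≤ 0 := by
      intro i _
      by_cases hi : i ∈ tneg
      · have : ¬ s i = true := by simpa [htneg] using hi
        simp [hwdef, this]
        positivity
      · simp [hz i hi]
    have hex : ∃ i ∈ Finset.univ, w i * (e.repr a i)^2 < 0 := by
      have : ∃ i, e.repr a i ≠ 0 := by
        by_contra hno
        push_neg at hno
        exact hane (e.ext_elem fun i => by simp [hno i])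
      obtain ⟨i, hi⟩ := this
      have hit : i ∈ tneg := by
        by_contra hc
        exact hi (hz i hc)
      have hsi : ¬ s i = true := by simpa [htneg] using hit
      refine ⟨i, Finset.mem_univ i, ?_⟩
      have : w i = -1 := by simp [hwdef, hsi]
      rw [this]
      nlinarith [sq_pos_of_ne_zero hi]
    have := Finset.sum_neg' hnonpos hex
    exact this
  -- nonpositivity / nonnegativity on the spans (weak versions)
  have nonpos_on : ∀ a ∈ Submodule.span ℝ (e '' ↑tneg), diagForm e w a a ≤ 0 := by
    intro a ha
    rcases eq_or_ne a 0 with rfl | hne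
    · simp
    · exact le_of_lt (neg_def a ha hne)
  have nonneg_on : ∀ a ∈ Submodule.span ℝ (e '' ↑tpos), 0 ≤ diagForm e w a a := by
    intro a ha
    rcases eq_or_ne a 0 with rfl | hne
    · simp
    · exact le_of_lt (pos_def a ha hne)
  constructor
  · constructor
    · exact ⟨Submodule.span ℝ (e '' ↑tpos), span_rank tpos, pos_def⟩
    · intro P hP
      set N := Submodule.span ℝ (e '' ↑tneg) with hN
      have hbot : P ⊓ N = ⊥ := by
        rw [Submodule.eq_bot_iff]
        intro z hz
        by_contra hzne
        exact absurd (hP z hz.1 hzne) (not_lt.mpr (nonpos_on z hz.2))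
      have hsum := Submodule.finrank_sup_add_finrank_inf_eq P N
      rw [hbot] at hsum
      simp only [finrank_bot, add_zero] at hsum
      have hle : Module.finrank ℝ ↥(P ⊔ N) ≤ 6 := hrank ▸ Submodule.finrank_le (P ⊔ N)
      have hNr : Module.finrank ℝ ↥N = tneg.card := span_rank tneg
      omega
  · constructor
    · exact ⟨Submodule.span ℝ (e '' ↑tneg), span_rank tneg, neg_def⟩
    · intro N hNdef
      set P := Submodule.span ℝ (e '' ↑tpos) with hP
      have hbot : N ⊓ P = ⊥ := by
        rw [Submodule.eq_bot_iff]
        intro z hz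
        by_contra hzne
        exact absurd (hNdef z hz.1 hzne) (not_lt.mpr (nonneg_on z hz.2))
      have hsum := Submodule.finrank_sup_add_finrank_inf_eq N P
      rw [hbot] at hsum
      simp only [finrank_bot, add_zero] at hsum
      have hle : Module.finrank ℝ ↥(N ⊔ P) ≤ 6 := hrank ▸ Submodule.finrank_le (N ⊔ P)
      have hPr : Module.finrank ℝ ↥P = tpos.card := span_rank tpos
      omega
end Diag

lemma vec6_five {α : Type*} (a0 a1 a2 a3 a4 a5 : α) :
    ![a0, a1, a2, a3, a4, a5] (5 : Fin 6) = a5 := rfl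

/-- structure constant coefficients for the bracket table -/
def brC : Fin 6 → Fin 6 → ℝ :=
  ![![0,1,1,0,0,0], ![-1,0,0,0,1,0], ![-1,0,0,1,0,0],
    ![0,0,-1,0,0,0], ![0,-1,0,0,0,0], ![0,0,0,0,0,0]]

/-- target index for the bracket table -/
def brT : Fin 6 → Fin 6 → Fin 6 :=
  ![![0,3,4,0,0,0], ![3,0,0,0,5,0], ![4,0,0,5,0,0],
    ![0,0,5,0,0,0], ![0,5,0,0,0,0], ![0,0,0,0,0,0]]

lemma brC00 : brC 0 0 = 0 := rfl
lemma brT00 : brT 0 0 = 0 := rfl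
lemma brC01 : brC 0 1 = 1 := rfl
lemma brT01 : brT 0 1 = 3 := rfl
lemma brC02 : brC 0 2 = 1 := rfl
lemma brT02 : brT 0 2 = 4 := rfl
lemma brC03 : brC 0 3 = 0 := rfl
lemma brT03 : brT 0 3 = 0 := rfl
lemma brC04 : brC 0 4 = 0 := rfl
lemma brT04 : brT 0 4 = 0 := rfl
lemma brC05 : brC 0 5 = 0 := rfl
lemma brT05 : brT 0 5 = 0 := rfl
lemma brC10 : brC 1 0 = -1 := rfl
lemma brT10 : brT 1 0 = 3 := rfl
lemma brC11 : brC 1 1 = 0 := rfl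
lemma brT11 : brT 1 1 = 0 := rfl
lemma brC12 : brC 1 2 = 0 := rfl
lemma brT12 : brT 1 2 = 0 := rfl
lemma brC13 : brC 1 3 = 0 := rfl
lemma brT13 : brT 1 3 = 0 := rfl
lemma brC14 : brC 1 4 = 1 := rfl
lemma brT14 : brT 1 4 = 5 := rfl
lemma brC15 : brC 1 5 = 0 := rfl
lemma brT15 : brT 1 5 = 0 := rfl
lemma brC20 : brC 2 0 = -1 := rfl
lemma brT20 : brT 2 0 = 4 := rfl
lemma brC21 : brC 2 1 = 0 := rfl
lemma brT21 : brT 2 1 = 0 := rfl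
lemma brC22 : brC 2 2 = 0 := rfl
lemma brT22 : brT 2 2 = 0 := rfl
lemma brC23 : brC 2 3 = 1 := rfl
lemma brT23 : brT 2 3 = 5 := rfl
lemma brC24 : brC 2 4 = 0 := rfl
lemma brT24 : brT 2 4 = 0 := rfl
lemma brC25 : brC 2 5 = 0 := rfl
lemma brT25 : brT 2 5 = 0 := rfl
lemma brC30 : brC 3 0 = 0 := rfl
lemma brT30 : brT 3 0 = 0 := rfl
lemma brC31 : brC 3 1 = 0 := rfl
lemma brT31 : brT 3 1 = 0 := rfl
lemma brC32 : brC 3 2 = -1 := rfl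
lemma brT32 : brT 3 2 = 5 := rfl
lemma brC33 : brC 3 3 = 0 := rfl
lemma brT33 : brT 3 3 = 0 := rfl
lemma brC34 : brC 3 4 = 0 := rfl
lemma brT34 : brT 3 4 = 0 := rfl
lemma brC35 : brC 3 5 = 0 := rfl
lemma brT35 : brT 3 5 = 0 := rfl
lemma brC40 : brC 4 0 = 0 := rfl
lemma brT40 : brT 4 0 = 0 := rfl
lemma brC41 : brC 4 1 = -1 := rfl
lemma brT41 : brT 4 1 = 5 := rfl
lemma brC42 : brC 4 2 = 0 := rfl
lemma brT42 : brT 4 2 = 0 := rfl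
lemma brC43 : brC 4 3 = 0 := rfl
lemma brT43 : brT 4 3 = 0 := rfl
lemma brC44 : brC 4 4 = 0 := rfl
lemma brT44 : brT 4 4 = 0 := rfl
lemma brC45 : brC 4 5 = 0 := rfl
lemma brT45 : brT 4 5 = 0 := rfl
lemma brC50 : brC 5 0 = 0 := rfl
lemma brT50 : brT 5 0 = 0 := rfl
lemma brC51 : brC 5 1 = 0 := rfl
lemma brT51 : brT 5 1 = 0 := rfl
lemma brC52 : brC 5 2 = 0 := rfl
lemma brT52 : brT 5 2 = 0 := rfl
lemma brC53 : brC 5 3 = 0 := rfl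
lemma brT53 : brT 5 3 = 0 := rfl
lemma brC54 : brC 5 4 = 0 := rfl
lemma brT54 : brT 5 4 = 0 := rfl
lemma brC55 : brC 5 5 = 0 := rfl
lemma brT55 : brT 5 5 = 0 := rfl


set_option maxHeartbeats 1000000 in
/-- On the 6-dimensional nilpotent Lie algebra `631:6`, the displayed diagonal metrics
are Ricci-flat; in particular there are Ricci-flat metrics of every indefinite
signature `(p, q)` with `p + q = 6`. -/
theorem ricci_flat_diagonal_631_6 {L : Type} [LieRing L] [LieAlgebra ℝ L]
    [LieRing.IsNilpotent L]
    (e : Module.Basis (Fin 6) ℝ L)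
    (h01 : ⁅e 0, e 1⁆ = e 3) (h02 : ⁅e 0, e 2⁆ = e 4)
    (h14 : ⁅e 1, e 4⁆ = e 5) (h23 : ⁅e 2, e 3⁆ = e 5)
    (hzero : ∀ i j : Fin 6,
      (i, j) ∉ ([(0, 1), (0, 2), (1, 4), (2, 3)] : List (Fin 6 × Fin 6)) →
      (j, i) ∉ ([(0, 1), (0, 2), (1, 4), (2, 3)] : List (Fin 6 × Fin 6)) →
      ⁅e i, e j⁆ = 0) :
    (∀ g₁ g₂ g₃ x : ℝ, g₁ ≠ 0 → g₂ ≠ 0 → g₃ ≠ 0 → x ≠ 0 →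
      ∀ B : LinearMap.BilinForm ℝ L,
        (∀ i j, B (e i) (e j) = if i = j then
          ![g₁, g₂, g₃, x * g₁ * g₂, -(x * g₁ * g₃), x ^ 2 * g₁ * g₂ * g₃] i else 0) →
        RicciFlat B) ∧
    (∀ p q : ℕ, p + q = 6 → 1 ≤ p → 1 ≤ q →
      ∃ B : LinearMap.BilinForm ℝ L, (∀ x y, B x y = B y x) ∧
        (∀ x, (∀ y, B x y = 0) → x = 0) ∧ RicciFlat B ∧ IsSignature B p q) := by
  classical
  -- the bracket table
  have h10 : ⁅e 1, e 0⁆ = -(e 3) := by rw [← lie_skew, h01]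
  have h20 : ⁅e 2, e 0⁆ = -(e 4) := by rw [← lie_skew, h02]
  have h41 : ⁅e 4, e 1⁆ = -(e 5) := by rw [← lie_skew, h14]
  have h32 : ⁅e 3, e 2⁆ = -(e 5) := by rw [← lie_skew, h23]
  have hbr : ∀ i j, ⁅e i, e j⁆ = brC i j • e (brT i j) := by
    intro i j
    fin_cases i <;> fin_cases j <;>
      simp only [Fin.zero_eta, Fin.mk_one, Fin.reduceFinMk, brC00, brT00, brC01, brT01, brC02, brT02, brC03, brT03, brC04, brT04, brC05, brT05, brC10, brT10, brC11, brT11, brC12, brT12, brC13, brT13, brC14, brT14, brC15, brT15, brC20, brT20, brC21, brT21, brC22, brT22, brC23, brT23, brC24, brT24, brC25, brT25, brC30, brT30, brC31, brT31, brC32, brT32, brC33, brT33, brC34, brT34, brC35, brT35, brC40, brT40, brC41, brT41, brC42, brT42, brC43, brT43, brC44, brT44, brC45, brT45, brC50, brT50, brC51, brT51, brC52, brT52, brC53, brT53, brC54, brT54, brC55, brT55, one_smul, neg_smul, zero_smul, neg_neg] <;>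
      first
        | exact h01 | exact h02 | exact h14 | exact h23
        | exact h10 | exact h20 | exact h41 | exact h32
        | (refine hzero _ _ ?_ ?_ <;> decide)
  have key : ∀ g₁ g₂ g₃ x : ℝ, g₁ ≠ 0 → g₂ ≠ 0 → g₃ ≠ 0 → x ≠ 0 →
      ∀ B : LinearMap.BilinForm ℝ L,
        (∀ i j, B (e i) (e j) = if i = j then
          ![g₁, g₂, g₃, x * g₁ * g₂, -(x * g₁ * g₃), x ^ 2 * g₁ * g₂ * g₃] i else 0) →
        RicciFlat B := by
    intro g₁ g₂ g₃ x hg1 hg2 hg3 hx B hB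
    intro ι _ _ v u hdp xx yy
    set V : Fin 6 → ℝ := ![g₁, g₂, g₃, x * g₁ * g₂, -(x * g₁ * g₃), x ^ 2 * g₁ * g₂ * g₃]
      with hV
    have hV0 : V 0 = g₁ := rfl
    have hV1 : V 1 = g₂ := rfl
    have hV2 : V 2 = g₃ := rfl
    have hV3 : V 3 = x * g₁ * g₂ := rfl
    have hV4 : V 4 = -(x * g₁ * g₃) := rfl
    have hV5 : V 5 = x ^ 2 * g₁ * g₂ * g₃ := rfl
    have hVne : ∀ k, V k ≠ 0 := by
      intro k
      fin_cases k <;>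
        simp [hV, vec6_five, mul_eq_zero, pow_eq_zero_iff, hg1, hg2, hg3, hx]
    have hdp' : IsDualPair B ⇑e (fun k => (V k)⁻¹ • e k) := by
      intro i j
      have : B (e i) ((V j)⁻¹ • e j) = (V j)⁻¹ * B (e i) (e j) := by
        rw [map_smul, smul_eq_mul]
      rw [this, hB]
      rcases eq_or_ne i j with rfl | hne
      · simp [inv_mul_cancel₀ (hVne i)]
      · simp [hne]
    rw [ricci_eq_of_dualPair B v u hdp e (fun k => (V k)⁻¹ • e k) hdp' xx yy]
    refine ricci_eq_zero_of_basis B e ⇑e (fun k => (V k)⁻¹ • e k) ?_ xx yy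
    have hterm1 : ∀ p q k : Fin 6, B ⁅e p, e k⁆ ⁅e q, (V k)⁻¹ • e k⁆
        = (V k)⁻¹ * brC p k * brC q k * (if brT p k = brT q k then V (brT p k) else 0) := by
      intro p q k
      rw [lie_smul, hbr p k, hbr q k]
      simp only [map_smul, LinearMap.smul_apply, smul_eq_mul, hB]
      ring
    have hterm2 : ∀ p k l : Fin 6, B ⁅e k, e l⁆ (e p)
        = brC k l * (if brT k l = p then V (brT k l) else 0) := by
      intro p k l
      rw [hbr k l]
      simp only [map_smul, LinearMap.smul_apply, smul_eq_mul, hB]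
    have hterm3 : ∀ q k l : Fin 6, B ⁅(V k)⁻¹ • e k, (V l)⁻¹ • e l⁆ (e q)
        = (V k)⁻¹ * ((V l)⁻¹ * (brC k l * (if brT k l = q then V (brT k l) else 0))) := by
      intro q k l
      rw [smul_lie, lie_smul, hbr k l]
      simp only [map_smul, LinearMap.smul_apply, smul_eq_mul, hB]
      try ring
    intro p q
    simp only [ricci, hterm1, hterm2, hterm3]
    fin_cases p <;> fin_cases q <;>
      (simp only [Fin.zero_eta, Fin.mk_one, Fin.reduceFinMk, Fin.sum_univ_six, brC00, brT00, brC01, brT01, brC02, brT02, brC03, brT03, brC04, brT04, brC05, brT05, brC10, brT10, brC11, brT11, brC12, brT12, brC13, brT13, brC14, brT14, brC15, brT15, brC20, brT20, brC21, brT21, brC22, brT22, brC23, brT23, brC24, brT24, brC25, brT25, brC30, brT30, brC31, brT31, brC32, brT32, brC33, brT33, brC34, brT34, brC35, brT35, brC40, brT40, brC41, brT41, brC42, brT42, brC43, brT43, brC44, brT44, brC45, brT45, brC50, brT50, brC51, brT51, brC52, brT52, brC53, brT53, brC54, brT54, brC55, brT55]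
       simp [hV0, hV1, hV2, hV3, hV4, hV5]
       try field_simp
       try ring)
  refine ⟨key, ?_⟩
  intro p q hpq hp hq
  have hq5 : q ≤ 5 := by omega
  interval_cases q
  · -- q = 1, p = 5
    have hp5 : p = 5 := by omega
    subst hp5
    refine ⟨diagForm e fun i => if (![true, true, true, true, false, true] : Fin 6 → Bool) i
      then 1 else -1, diagForm_comm _ _, diagForm_nondeg _ _ (by
        intro i; fin_cases i <;> norm_num), ?_, ?_⟩
    · refine key 1 1 1 1 one_ne_zero one_ne_zero one_ne_zero one_ne_zero _ ?_
      intro i j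
      rw [diagForm_basis]
      rcases eq_or_ne i j with rfl | hne
      · fin_cases i <;> norm_num [vec6_five]
      · simp [hne]
    · have hsig := diagForm_isSignature e ![true, true, true, true, false, true]
      have c1 : (Finset.univ.filter fun i =>
          (![true, true, true, true, false, true] : Fin 6 → Bool) i = true).card = 5 := by decide
      have c2 : (Finset.univ.filter fun i =>
          ¬ (![true, true, true, true, false, true] : Fin 6 → Bool) i = true).card = 1 := by
        decide
      rw [c1, c2] at hsig
      exact hsig
  · -- q = 2, p = 4
    have hp' : p = 4 := by omega
    subst hp'
    refine ⟨diagForm e fun i => if (![true, true, false, true, true, false] : Fin 6 → Bool) i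
      then 1 else -1, diagForm_comm _ _, diagForm_nondeg _ _ (by
        intro i; fin_cases i <;> norm_num), ?_, ?_⟩
    · refine key 1 1 (-1) 1 (by norm_num) (by norm_num) (by norm_num) (by norm_num) _ ?_
      intro i j
      rw [diagForm_basis]
      rcases eq_or_ne i j with rfl | hne
      · fin_cases i <;> norm_num [vec6_five]
      · simp [hne]
    · have hsig := diagForm_isSignature e ![true, true, false, true, true, false]
      have c1 : (Finset.univ.filter fun i =>
          (![true, true, false, true, true, false] : Fin 6 → Bool) i = true).card = 4 := by decide
      have c2 : (Finset.univ.filter fun i =>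
          ¬ (![true, true, false, true, true, false] : Fin 6 → Bool) i = true).card = 2 := by decide
      rw [c1, c2] at hsig
      exact hsig
  · -- q = 3, p = 3
    have hp' : p = 3 := by omega
    subst hp'
    refine ⟨diagForm e fun i => if (![false, true, true, false, true, false] : Fin 6 → Bool) i
      then 1 else -1, diagForm_comm _ _, diagForm_nondeg _ _ (by
        intro i; fin_cases i <;> norm_num), ?_, ?_⟩
    · refine key (-1) 1 1 1 (by norm_num) (by norm_num) (by norm_num) (by norm_num) _ ?_
      intro i j
      rw [diagForm_basis]
      rcases eq_or_ne i j with rfl | hne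
      · fin_cases i <;> norm_num [vec6_five]
      · simp [hne]
    · have hsig := diagForm_isSignature e ![false, true, true, false, true, false]
      have c1 : (Finset.univ.filter fun i =>
          (![false, true, true, false, true, false] : Fin 6 → Bool) i = true).card = 3 := by decide
      have c2 : (Finset.univ.filter fun i =>
          ¬ (![false, true, true, false, true, false] : Fin 6 → Bool) i = true).card = 3 := by decide
      rw [c1, c2] at hsig
      exact hsig
  · -- q = 4, p = 2
    have hp' : p = 2 := by omega
    subst hp'
    refine ⟨diagForm e fun i => if (![true, false, true, false, false, false] : Fin 6 → Bool) i
      then 1 else -1, diagForm_comm _ _, diagForm_nondeg _ _ (by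
        intro i; fin_cases i <;> norm_num), ?_, ?_⟩
    · refine key 1 (-1) 1 1 (by norm_num) (by norm_num) (by norm_num) (by norm_num) _ ?_
      intro i j
      rw [diagForm_basis]
      rcases eq_or_ne i j with rfl | hne
      · fin_cases i <;> norm_num [vec6_five]
      · simp [hne]
    · have hsig := diagForm_isSignature e ![true, false, true, false, false, false]
      have c1 : (Finset.univ.filter fun i =>
          (![true, false, true, false, false, false] : Fin 6 → Bool) i = true).card = 2 := by decide
      have c2 : (Finset.univ.filter fun i =>
          ¬ (![true, false, true, false, false, false] : Fin 6 → Bool) i = true).card = 4 := by decide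
      rw [c1, c2] at hsig
      exact hsig
  · -- q = 5, p = 1
    have hp' : p = 1 := by omega
    subst hp'
    refine ⟨diagForm e fun i => if (![false, false, false, false, true, false] : Fin 6 → Bool) i
      then 1 else -1, diagForm_comm _ _, diagForm_nondeg _ _ (by
        intro i; fin_cases i <;> norm_num), ?_, ?_⟩
    · refine key (-1) (-1) (-1) (-1) (by norm_num) (by norm_num) (by norm_num) (by norm_num) _ ?_
      intro i j
      rw [diagForm_basis]
      rcases eq_or_ne i j with rfl | hne
      · fin_cases i <;> norm_num [vec6_five]
      · simp [hne]
    · have hsig := diagForm_isSignature e ![false, false, false, false, true, false]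
      have c1 : (Finset.univ.filter fun i =>
          (![false, false, false, false, true, false] : Fin 6 → Bool) i = true).card = 1 := by decide
      have c2 : (Finset.univ.filter fun i =>
          ¬ (![false, false, false, false, true, false] : Fin 6 → Bool) i = true).card = 5 := by decide
      rw [c1, c2] at hsig
      exact hsig
end

section
/- For every real number λ with λ ≠ 0 and λ ≠ 1, let 𝔤_λ be the 7-dimensional real nilpotent Lie algebra with basis e_1,…,e_7 whose only nonzero brackets among basis vectors are [e_1,e_2] = (1−λ)·e_3, [e_1,e_3] = e_4, [e_1,e_4] = λ·e_5, [e_2,e_3] = e_5, [e_1,e_5] = e_6, [e_2,e_4] = e_6, [e_1,e_6] = e_7, [e_2,e_5] = e_7, [e_3,e_4] = e_7 (this bracket satisfies the Jacobi identity for every λ). Then no diagonal metric on 𝔤_λ is Ricci-flat: for all nonzero real numbers g_1,…,g_7, the metric making the basis orthogonal with ⟨e_i,e_i⟩ = g_i has nonvanishing Ricci tensor. -/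
set_option maxHeartbeats 1600000 in
/-- The 7-dimensional nilpotent Lie algebra `754321:9` admits no diagonal Ricci-flat
metric. -/
theorem no_diagonal_ricci_flat_754321_9 {L : Type} [LieRing L] [LieAlgebra ℝ L]
    [LieRing.IsNilpotent L] (lam : ℝ) (hlam0 : lam ≠ 0) (hlam1 : lam ≠ 1)
    (e : Module.Basis (Fin 7) ℝ L)
    (h01 : ⁅e 0, e 1⁆ = (1 - lam) • e 2) (h02 : ⁅e 0, e 2⁆ = e 3)
    (h03 : ⁅e 0, e 3⁆ = lam • e 4) (h12 : ⁅e 1, e 2⁆ = e 4)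
    (h04 : ⁅e 0, e 4⁆ = e 5) (h13 : ⁅e 1, e 3⁆ = e 5)
    (h05 : ⁅e 0, e 5⁆ = e 6) (h14 : ⁅e 1, e 4⁆ = e 6) (h23 : ⁅e 2, e 3⁆ = e 6)
    (hzero : ∀ i j : Fin 7,
      (i, j) ∉ ([(0, 1), (0, 2), (0, 3), (1, 2), (0, 4), (1, 3), (0, 5), (1, 4),
        (2, 3)] : List (Fin 7 × Fin 7)) →
      (j, i) ∉ ([(0, 1), (0, 2), (0, 3), (1, 2), (0, 4), (1, 3), (0, 5), (1, 4),
        (2, 3)] : List (Fin 7 × Fin 7)) →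
      ⁅e i, e j⁆ = 0) :
    ∀ g : Fin 7 → ℝ, (∀ i, g i ≠ 0) →
      ∀ B : LinearMap.BilinForm ℝ L,
        (∀ i j, B (e i) (e j) = if i = j then g i else 0) →
        ¬ RicciFlat B := by
  intro g hg B hB hRF
  set u : Fin 7 → L := fun i => (g i)⁻¹ • e i with hu
  have hdual : IsDualPair B (⇑e) u := by
    intro i j
    simp only [hu, map_smul, smul_eq_mul, hB]
    split
    · next h => subst h; exact inv_mul_cancel₀ (hg i)
    · exact mul_zero _
  have z00 : ⁅e 0, e 0⁆ = 0 := hzero 0 0 (by decide) (by decide)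
  have z06 : ⁅e 0, e 6⁆ = 0 := hzero 0 6 (by decide) (by decide)
  have h10 : ⁅e 1, e 0⁆ = -((1 - lam) • e 2) := by rw [← lie_skew, h01]
  have z11 : ⁅e 1, e 1⁆ = 0 := hzero 1 1 (by decide) (by decide)
  have z15 : ⁅e 1, e 5⁆ = 0 := hzero 1 5 (by decide) (by decide)
  have z16 : ⁅e 1, e 6⁆ = 0 := hzero 1 6 (by decide) (by decide)
  have h20 : ⁅e 2, e 0⁆ = -(e 3) := by rw [← lie_skew, h02]
  have h21 : ⁅e 2, e 1⁆ = -(e 4) := by rw [← lie_skew, h12]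
  have z22 : ⁅e 2, e 2⁆ = 0 := hzero 2 2 (by decide) (by decide)
  have z24 : ⁅e 2, e 4⁆ = 0 := hzero 2 4 (by decide) (by decide)
  have z25 : ⁅e 2, e 5⁆ = 0 := hzero 2 5 (by decide) (by decide)
  have z26 : ⁅e 2, e 6⁆ = 0 := hzero 2 6 (by decide) (by decide)
  have h30 : ⁅e 3, e 0⁆ = -(lam • e 4) := by rw [← lie_skew, h03]
  have h31 : ⁅e 3, e 1⁆ = -(e 5) := by rw [← lie_skew, h13]
  have h32 : ⁅e 3, e 2⁆ = -(e 6) := by rw [← lie_skew, h23]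
  have z33 : ⁅e 3, e 3⁆ = 0 := hzero 3 3 (by decide) (by decide)
  have z34 : ⁅e 3, e 4⁆ = 0 := hzero 3 4 (by decide) (by decide)
  have z35 : ⁅e 3, e 5⁆ = 0 := hzero 3 5 (by decide) (by decide)
  have z36 : ⁅e 3, e 6⁆ = 0 := hzero 3 6 (by decide) (by decide)
  have h40 : ⁅e 4, e 0⁆ = -(e 5) := by rw [← lie_skew, h04]
  have h41 : ⁅e 4, e 1⁆ = -(e 6) := by rw [← lie_skew, h14]
  have z42 : ⁅e 4, e 2⁆ = 0 := hzero 4 2 (by decide) (by decide)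
  have z43 : ⁅e 4, e 3⁆ = 0 := hzero 4 3 (by decide) (by decide)
  have z44 : ⁅e 4, e 4⁆ = 0 := hzero 4 4 (by decide) (by decide)
  have z45 : ⁅e 4, e 5⁆ = 0 := hzero 4 5 (by decide) (by decide)
  have z46 : ⁅e 4, e 6⁆ = 0 := hzero 4 6 (by decide) (by decide)
  have h50 : ⁅e 5, e 0⁆ = -(e 6) := by rw [← lie_skew, h05]
  have z51 : ⁅e 5, e 1⁆ = 0 := hzero 5 1 (by decide) (by decide)
  have z52 : ⁅e 5, e 2⁆ = 0 := hzero 5 2 (by decide) (by decide)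
  have z53 : ⁅e 5, e 3⁆ = 0 := hzero 5 3 (by decide) (by decide)
  have z54 : ⁅e 5, e 4⁆ = 0 := hzero 5 4 (by decide) (by decide)
  have z55 : ⁅e 5, e 5⁆ = 0 := hzero 5 5 (by decide) (by decide)
  have z56 : ⁅e 5, e 6⁆ = 0 := hzero 5 6 (by decide) (by decide)
  have z60 : ⁅e 6, e 0⁆ = 0 := hzero 6 0 (by decide) (by decide)
  have z61 : ⁅e 6, e 1⁆ = 0 := hzero 6 1 (by decide) (by decide)
  have z62 : ⁅e 6, e 2⁆ = 0 := hzero 6 2 (by decide) (by decide)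
  have z63 : ⁅e 6, e 3⁆ = 0 := hzero 6 3 (by decide) (by decide)
  have z64 : ⁅e 6, e 4⁆ = 0 := hzero 6 4 (by decide) (by decide)
  have z65 : ⁅e 6, e 5⁆ = 0 := hzero 6 5 (by decide) (by decide)
  have z66 : ⁅e 6, e 6⁆ = 0 := hzero 6 6 (by decide) (by decide)
  have key : ∀ a : Fin 7, ricci B (⇑e) u (e a) (e a) = 0 := fun a => hRF (Fin 7) e u hdual (e a) (e a)
  have ha0 := key 0
  simp only [ricci, Fin.sum_univ_seven, hu, lie_smul, smul_lie, map_smul, map_neg,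
    LinearMap.neg_apply, LinearMap.smul_apply, smul_eq_mul,
    z00, h01, h02, h03, h04, h05, z06, h10, z11, h12, h13, h14, z15, z16, h20, h21, z22, h23, z24, z25, z26, h30, h31, h32, z33, z34, z35, z36, h40, h41, z42, z43, z44, z45, z46, h50, z51, z52, z53, z54, z55, z56, z60, z61, z62, z63, z64, z65, z66,
    map_zero, LinearMap.zero_apply, hB, Fin.reduceEq, reduceIte] at ha0
  norm_num at ha0
  ring_nf at ha0
  have ha1 := key 1
  simp only [ricci, Fin.sum_univ_seven, hu, lie_smul, smul_lie, map_smul, map_neg,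
    LinearMap.neg_apply, LinearMap.smul_apply, smul_eq_mul,
    z00, h01, h02, h03, h04, h05, z06, h10, z11, h12, h13, h14, z15, z16, h20, h21, z22, h23, z24, z25, z26, h30, h31, h32, z33, z34, z35, z36, h40, h41, z42, z43, z44, z45, z46, h50, z51, z52, z53, z54, z55, z56, z60, z61, z62, z63, z64, z65, z66,
    map_zero, LinearMap.zero_apply, hB, Fin.reduceEq, reduceIte] at ha1
  norm_num at ha1
  ring_nf at ha1
  have ha2 := key 2
  simp only [ricci, Fin.sum_univ_seven, hu, lie_smul, smul_lie, map_smul, map_neg,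
    LinearMap.neg_apply, LinearMap.smul_apply, smul_eq_mul,
    z00, h01, h02, h03, h04, h05, z06, h10, z11, h12, h13, h14, z15, z16, h20, h21, z22, h23, z24, z25, z26, h30, h31, h32, z33, z34, z35, z36, h40, h41, z42, z43, z44, z45, z46, h50, z51, z52, z53, z54, z55, z56, z60, z61, z62, z63, z64, z65, z66,
    map_zero, LinearMap.zero_apply, hB, Fin.reduceEq, reduceIte] at ha2
  norm_num at ha2
  ring_nf at ha2
  have ha3 := key 3
  simp only [ricci, Fin.sum_univ_seven, hu, lie_smul, smul_lie, map_smul, map_neg,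
    LinearMap.neg_apply, LinearMap.smul_apply, smul_eq_mul,
    z00, h01, h02, h03, h04, h05, z06, h10, z11, h12, h13, h14, z15, z16, h20, h21, z22, h23, z24, z25, z26, h30, h31, h32, z33, z34, z35, z36, h40, h41, z42, z43, z44, z45, z46, h50, z51, z52, z53, z54, z55, z56, z60, z61, z62, z63, z64, z65, z66,
    map_zero, LinearMap.zero_apply, hB, Fin.reduceEq, reduceIte] at ha3
  norm_num at ha3
  ring_nf at ha3
  have ha4 := key 4
  simp only [ricci, Fin.sum_univ_seven, hu, lie_smul, smul_lie, map_smul, map_neg,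
    LinearMap.neg_apply, LinearMap.smul_apply, smul_eq_mul,
    z00, h01, h02, h03, h04, h05, z06, h10, z11, h12, h13, h14, z15, z16, h20, h21, z22, h23, z24, z25, z26, h30, h31, h32, z33, z34, z35, z36, h40, h41, z42, z43, z44, z45, z46, h50, z51, z52, z53, z54, z55, z56, z60, z61, z62, z63, z64, z65, z66,
    map_zero, LinearMap.zero_apply, hB, Fin.reduceEq, reduceIte] at ha4
  norm_num at ha4
  ring_nf at ha4
  have ha5 := key 5
  simp only [ricci, Fin.sum_univ_seven, hu, lie_smul, smul_lie, map_smul, map_neg,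
    LinearMap.neg_apply, LinearMap.smul_apply, smul_eq_mul,
    z00, h01, h02, h03, h04, h05, z06, h10, z11, h12, h13, h14, z15, z16, h20, h21, z22, h23, z24, z25, z26, h30, h31, h32, z33, z34, z35, z36, h40, h41, z42, z43, z44, z45, z46, h50, z51, z52, z53, z54, z55, z56, z60, z61, z62, z63, z64, z65, z66,
    map_zero, LinearMap.zero_apply, hB, Fin.reduceEq, reduceIte] at ha5
  norm_num at ha5
  ring_nf at ha5
  have ha6 := key 6
  simp only [ricci, Fin.sum_univ_seven, hu, lie_smul, smul_lie, map_smul, map_neg,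
    LinearMap.neg_apply, LinearMap.smul_apply, smul_eq_mul,
    z00, h01, h02, h03, h04, h05, z06, h10, z11, h12, h13, h14, z15, z16, h20, h21, z22, h23, z24, z25, z26, h30, h31, h32, z33, z34, z35, z36, h40, h41, z42, z43, z44, z45, z46, h50, z51, z52, z53, z54, z55, z56, z60, z61, z62, z63, z64, z65, z66,
    map_zero, LinearMap.zero_apply, hB, Fin.reduceEq, reduceIte] at ha6
  norm_num at ha6
  ring_nf at ha6
  have hI0 : g 0 * (g 0)⁻¹ = 1 := mul_inv_cancel₀ (hg 0)
  have hI1 : g 1 * (g 1)⁻¹ = 1 := mul_inv_cancel₀ (hg 1)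
  have hI2 : g 2 * (g 2)⁻¹ = 1 := mul_inv_cancel₀ (hg 2)
  have hI3 : g 3 * (g 3)⁻¹ = 1 := mul_inv_cancel₀ (hg 3)
  have hI4 : g 4 * (g 4)⁻¹ = 1 := mul_inv_cancel₀ (hg 4)
  have hI5 : g 5 * (g 5)⁻¹ = 1 := mul_inv_cancel₀ (hg 5)
  have hI6 : g 6 * (g 6)⁻¹ = 1 := mul_inv_cancel₀ (hg 6)
  have hfin : g 3 * g 6 = 0 := by
    linear_combination
        ((1/7)*g 0^2*g 2*g 5^2*(g 0)⁻¹^2*(g 4)⁻¹ + (-1/7)*g 0^2*g 2*g 3*g 5*(g 0)⁻¹^2*(g 2)⁻¹) * ha0 +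
    ((2/7)*g 0^2*g 2*g 5^2*(g 0)⁻¹*(g 1)⁻¹*(g 4)⁻¹ + (-2/7)*g 0^2*g 2*g 3*g 5*(g 0)⁻¹*(g 1)⁻¹*(g 2)⁻¹) * ha1 +
    ((-6/7)*g 0^2*g 2*g 5^2*(g 0)⁻¹*(g 2)⁻¹*(g 4)⁻¹ + (6/7)*g 0^2*g 2*g 3*g 5*(g 0)⁻¹*(g 2)⁻¹^2) * ha2 +
    ((6/7)*g 0^2*g 2*g 5^2*(g 0)⁻¹*(g 3)⁻¹*(g 4)⁻¹ + (8/7)*g 0^2*g 2*g 3*g 5*(g 0)⁻¹*(g 2)⁻¹*(g 3)⁻¹) * ha3 +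
    ((4/7)*g 0^2*g 2*g 5^2*(g 0)⁻¹*(g 4)⁻¹^2 + (10/7)*g 0^2*g 2*g 3*g 5*(g 0)⁻¹*(g 2)⁻¹*(g 4)⁻¹) * ha4 +
    ((2/7)*g 0^2*g 2*g 5^2*(g 0)⁻¹*(g 4)⁻¹*(g 5)⁻¹ + (-2/7)*g 0^2*g 2*g 3*g 5*(g 0)⁻¹*(g 2)⁻¹*(g 5)⁻¹) * ha5 +
    ((1/2)*g 0^2*g 2*g 3*g 5*(g 0)⁻¹*(g 2)⁻¹*(g 6)⁻¹) * ha6 +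
    (-1) * ((-1/7)*g 2*g 5^3*(g 4)⁻¹^2 + (1/7)*g 2*g 5^4*(g 4)⁻¹^2*(g 5)⁻¹ + (-2/7)*g 2*g 4*g 5^2*(g 3)⁻¹*(g 4)⁻¹*lam^2 + (2/7)*g 2*g 4^2*g 5^2*(g 3)⁻¹*(g 4)⁻¹^2*lam^2 + g 2*g 3*g 5*g 6^2*(g 2)⁻¹*(g 5)⁻¹*(g 6)⁻¹ + (-2/7)*g 2*g 3*g 5^2*(g 2)⁻¹*(g 4)⁻¹ + (-1/7)*g 2*g 3*g 5^3*(g 2)⁻¹*(g 4)⁻¹*(g 5)⁻¹ + (-5/7)*g 2*g 3*g 4*g 5*(g 2)⁻¹*(g 3)⁻¹*lam^2 + (5/7)*g 2*g 3*g 4^2*g 5*(g 2)⁻¹*(g 3)⁻¹*(g 4)⁻¹*lam^2 + (-4/7)*g 2*g 3^2*g 5*(g 2)⁻¹^2 + (3/7)*g 2*g 3^2*g 5^2*(g 2)⁻¹*(g 3)⁻¹*(g 4)⁻¹ + (4/7)*g 2*g 3^3*g 5*(g 2)⁻¹^2*(g 3)⁻¹ + (3/7)*g 2^2*g 5^2*(g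 1)⁻¹*(g 4)⁻¹ + (-6/7)*g 2^2*g 5^2*(g 1)⁻¹*(g 4)⁻¹*lam + (3/7)*g 2^2*g 5^2*(g 1)⁻¹*(g 4)⁻¹*lam^2 + (-3/7)*g 2^2*g 3*g 5*(g 1)⁻¹*(g 2)⁻¹ + (6/7)*g 2^2*g 3*g 5*(g 1)⁻¹*(g 2)⁻¹*lam + (-3/7)*g 2^2*g 3*g 5*(g 1)⁻¹*(g 2)⁻¹*lam^2 + (-3/7)*g 2^3*g 5^2*(g 1)⁻¹*(g 2)⁻¹*(g 4)⁻¹ + (6/7)*g 2^3*g 5^2*(g 1)⁻¹*(g 2)⁻¹*(g 4)⁻¹*lam + (-3/7)*g 2^3*g 5^2*(g 1)⁻¹*(g 2)⁻¹*(g 4)⁻¹*lam^2 + (3/7)*g 2^3*g 3*g 5*(g 1)⁻¹*(g 2)⁻¹^2 + (-6/7)*g 2^3*g 3*g 5*(g 1)⁻¹*(g 2)⁻¹^2*lam + (3/7)*g 2^3*g 3*g 5*(g 1)⁻¹*(g 2)⁻¹^2*lam^2 + (-1/7)*g 0*g 2*g 5^3*(g 1)⁻¹*(g 3)⁻¹*(g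 4)⁻¹ + (-1/7)*g 0*g 2*g 5^3*(g 0)⁻¹*(g 4)⁻¹^2 + (1/7)*g 0*g 2*g 5^4*(g 1)⁻¹*(g 3)⁻¹*(g 4)⁻¹*(g 5)⁻¹ + (1/7)*g 0*g 2*g 5^4*(g 0)⁻¹*(g 4)⁻¹^2*(g 5)⁻¹ + (5/7)*g 0*g 2*g 4*g 5^2*(g 1)⁻¹*(g 2)⁻¹*(g 4)⁻¹ + (-2/7)*g 0*g 2*g 4*g 5^2*(g 0)⁻¹*(g 3)⁻¹*(g 4)⁻¹*lam^2 + (2/7)*g 0*g 2*g 4^2*g 5^2*(g 1)⁻¹*(g 2)⁻¹*(g 4)⁻¹^2 + (2/7)*g 0*g 2*g 4^2*g 5^2*(g 0)⁻¹*(g 3)⁻¹*(g 4)⁻¹^2*lam^2 + (-1)*g 0*g 2*g 3*g 5*g 6*(g 2)⁻¹^2*(g 3)⁻¹ + (-1)*g 0*g 2*g 3*g 5*g 6*(g 1)⁻¹*(g 2)⁻¹*(g 4)⁻¹ + g 0*g 2*g 3*g 5*g 6^2*(g 2)⁻¹^2*(g 3)⁻¹*(g 6)⁻¹ + g 0*g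 2*g 3*g 5*g 6^2*(g 1)⁻¹*(g 2)⁻¹*(g 4)⁻¹*(g 6)⁻¹ + g 0*g 2*g 3*g 5*g 6^2*(g 0)⁻¹*(g 2)⁻¹*(g 5)⁻¹*(g 6)⁻¹ + (-6/7)*g 0*g 2*g 3*g 5^2*(g 1)⁻¹*(g 2)⁻¹*(g 3)⁻¹ + (-2/7)*g 0*g 2*g 3*g 5^2*(g 0)⁻¹*(g 2)⁻¹*(g 4)⁻¹ + (-1/7)*g 0*g 2*g 3*g 5^3*(g 1)⁻¹*(g 2)⁻¹*(g 3)⁻¹*(g 5)⁻¹ + (-1/7)*g 0*g 2*g 3*g 5^3*(g 0)⁻¹*(g 2)⁻¹*(g 4)⁻¹*(g 5)⁻¹ + (-5/7)*g 0*g 2*g 3*g 4*g 5*(g 1)⁻¹*(g 2)⁻¹^2 + (-5/7)*g 0*g 2*g 3*g 4*g 5*(g 0)⁻¹*(g 2)⁻¹*(g 3)⁻¹*lam^2 + (5/7)*g 0*g 2*g 3*g 4^2*g 5*(g 1)⁻¹*(g 2)⁻¹^2*(g 4)⁻¹ + (5/7)*g 0*g 2*g 3*g 4^2*g 5*(g 0)⁻¹*(g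 2)⁻¹*(g 3)⁻¹*(g 4)⁻¹*lam^2 + (-4/7)*g 0*g 2*g 3^2*g 5*(g 0)⁻¹*(g 2)⁻¹^2 + (3/7)*g 0*g 2*g 3^2*g 5^2*(g 0)⁻¹*(g 2)⁻¹*(g 3)⁻¹*(g 4)⁻¹ + (4/7)*g 0*g 2*g 3^3*g 5*(g 0)⁻¹*(g 2)⁻¹^2*(g 3)⁻¹ + (3/7)*g 0*g 2^2*g 5^2*(g 0)⁻¹*(g 1)⁻¹*(g 4)⁻¹ + (-6/7)*g 0*g 2^2*g 5^2*(g 0)⁻¹*(g 1)⁻¹*(g 4)⁻¹*lam + (3/7)*g 0*g 2^2*g 5^2*(g 0)⁻¹*(g 1)⁻¹*(g 4)⁻¹*lam^2 + (-3/7)*g 0*g 2^2*g 3*g 5*(g 0)⁻¹*(g 1)⁻¹*(g 2)⁻¹ + (6/7)*g 0*g 2^2*g 3*g 5*(g 0)⁻¹*(g 1)⁻¹*(g 2)⁻¹*lam + (-3/7)*g 0*g 2^2*g 3*g 5*(g 0)⁻¹*(g 1)⁻¹*(g 2)⁻¹*lam^2 + (-3/7)*g 0*g 2^3*g 5^2*(g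 0)⁻¹*(g 1)⁻¹*(g 2)⁻¹*(g 4)⁻¹ + (6/7)*g 0*g 2^3*g 5^2*(g 0)⁻¹*(g 1)⁻¹*(g 2)⁻¹*(g 4)⁻¹*lam + (-3/7)*g 0*g 2^3*g 5^2*(g 0)⁻¹*(g 1)⁻¹*(g 2)⁻¹*(g 4)⁻¹*lam^2 + (3/7)*g 0*g 2^3*g 3*g 5*(g 0)⁻¹*(g 1)⁻¹*(g 2)⁻¹^2 + (-6/7)*g 0*g 2^3*g 3*g 5*(g 0)⁻¹*(g 1)⁻¹*(g 2)⁻¹^2*lam + (3/7)*g 0*g 2^3*g 3*g 5*(g 0)⁻¹*(g 1)⁻¹*(g 2)⁻¹^2*lam^2) * hI0 +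
    (-1) * (g 3*g 5*g 6^2*(g 5)⁻¹*(g 6)⁻¹ + (-2/7)*g 3*g 5^2*(g 4)⁻¹ + (-1/7)*g 3*g 5^3*(g 4)⁻¹*(g 5)⁻¹ + (-5/7)*g 3*g 4*g 5*(g 3)⁻¹*lam^2 + (5/7)*g 3*g 4^2*g 5*(g 3)⁻¹*(g 4)⁻¹*lam^2 + (-4/7)*g 3^2*g 5*(g 2)⁻¹ + (3/7)*g 3^2*g 5^2*(g 3)⁻¹*(g 4)⁻¹ + (4/7)*g 3^3*g 5*(g 2)⁻¹*(g 3)⁻¹ + (-3/7)*g 2^2*g 5^2*(g 1)⁻¹*(g 4)⁻¹ + (6/7)*g 2^2*g 5^2*(g 1)⁻¹*(g 4)⁻¹*lam + (-3/7)*g 2^2*g 5^2*(g 1)⁻¹*(g 4)⁻¹*lam^2 + (3/7)*g 2^2*g 3*g 5*(g 1)⁻¹*(g 2)⁻¹ + (-6/7)*g 2^2*g 3*g 5*(g 1)⁻¹*(g 2)⁻¹*lam + (3/7)*g 2^2*g 3*g 5*(g 1)⁻¹*(g 2)⁻¹*lam^2 + (5/7)*g 0*g 4*g 5^2*(g 1)⁻¹*(g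 4)⁻¹ + (2/7)*g 0*g 4^2*g 5^2*(g 1)⁻¹*(g 4)⁻¹^2 + (-1)*g 0*g 3*g 5*g 6*(g 2)⁻¹*(g 3)⁻¹ + (-1)*g 0*g 3*g 5*g 6*(g 1)⁻¹*(g 4)⁻¹ + g 0*g 3*g 5*g 6^2*(g 2)⁻¹*(g 3)⁻¹*(g 6)⁻¹ + g 0*g 3*g 5*g 6^2*(g 1)⁻¹*(g 4)⁻¹*(g 6)⁻¹ + (-6/7)*g 0*g 3*g 5^2*(g 1)⁻¹*(g 3)⁻¹ + (-1/7)*g 0*g 3*g 5^3*(g 1)⁻¹*(g 3)⁻¹*(g 5)⁻¹ + (-5/7)*g 0*g 3*g 4*g 5*(g 1)⁻¹*(g 2)⁻¹ + (5/7)*g 0*g 3*g 4^2*g 5*(g 1)⁻¹*(g 2)⁻¹*(g 4)⁻¹) * hI2 +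
    (-1) * ((-5/7)*g 4*g 5*lam^2 + (5/7)*g 4^2*g 5*(g 4)⁻¹*lam^2 + (3/7)*g 3*g 5^2*(g 4)⁻¹ + (4/7)*g 3^2*g 5*(g 2)⁻¹ + (-1)*g 0*g 5*g 6*(g 2)⁻¹ + g 0*g 5*g 6^2*(g 2)⁻¹*(g 6)⁻¹ + (-6/7)*g 0*g 5^2*(g 1)⁻¹ + (-1/7)*g 0*g 5^3*(g 1)⁻¹*(g 5)⁻¹) * hI3 +
    (-1) * ((5/7)*g 4*g 5*lam^2 + (2/7)*g 2*g 4*g 5^2*(g 3)⁻¹*(g 4)⁻¹*lam^2 + g 0*g 5^2*(g 1)⁻¹ + (2/7)*g 0*g 4*g 5^2*(g 1)⁻¹*(g 4)⁻¹ + (5/7)*g 0*g 3*g 4*g 5*(g 1)⁻¹*(g 2)⁻¹) * hI4 +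
    (-1) * (g 3*g 6^2*(g 6)⁻¹ + (-1/7)*g 3*g 5^2*(g 4)⁻¹ + (1/7)*g 2*g 5^3*(g 4)⁻¹^2 + (-1/7)*g 0*g 5^2*(g 1)⁻¹ + (1/7)*g 0*g 2*g 5^3*(g 1)⁻¹*(g 3)⁻¹*(g 4)⁻¹) * hI5 +
    (-1) * (g 3*g 6 + g 0*g 5*g 6*(g 2)⁻¹ + g 0*g 3*g 5*g 6*(g 1)⁻¹*(g 4)⁻¹) * hI6
  exact mul_ne_zero (hg 3) (hg 6) hfin
end

section
/- Let 𝔤 be the 7-dimensional real nilpotent Lie algebra with basis e_1,…,e_7 whose only nonzero brackets among basis vectors are [e_1,e_2] = −e_3, [e_1,e_3] = e_4, [e_1,e_4] = e_5, [e_2,e_3] = e_5, [e_1,e_5] = e_6, [e_2,e_4] = e_6, [e_2,e_5] = e_7, [e_3,e_4] = e_7 (this bracket satisfies the Jacobi identity). Then for every nonzero real number y, the diagonal metric with diagonal entries (1, 1, 1, y, −y, y², y) is Ricci-flat. -/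
lemma repro {M : Type*} [AddCommGroup M] [Module ℝ M] {ι : Type*} [Fintype ι] [DecidableEq ι]
    (B : LinearMap.BilinForm ℝ M) (v : Module.Basis ι ℝ M) (u : ι → M)
    (hvu : ∀ i j, B (v i) (u j) = if i = j then (1 : ℝ) else 0) (w : M) :
    ∑ i, B w (u i) • v i = w := by
  have hcoef : ∀ i, B w (u i) = v.repr w i := by
    intro i
    conv_lhs => rw [← v.sum_repr w]
    simp only [map_sum, LinearMap.sum_apply, map_smul, LinearMap.smul_apply, smul_eq_mul, hvu, mul_ite, mul_one, mul_zero, Finset.sum_ite_eq', Finset.mem_univ, if_true]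
  simp_rw [hcoef]
  exact v.sum_repr w

lemma sum_dualPair {M : Type*} [AddCommGroup M] [Module ℝ M] {ι κ : Type*}
    [Fintype ι] [DecidableEq ι] [Fintype κ] [DecidableEq κ]
    (B : LinearMap.BilinForm ℝ M) (hsymm : ∀ x z, B x z = B z x)
    (v : Module.Basis ι ℝ M) (u : ι → M)
    (hvu : ∀ i j, B (v i) (u j) = if i = j then (1 : ℝ) else 0)
    (e : Module.Basis κ ℝ M) (f : κ → M)
    (hef : ∀ i j, B (e i) (f j) = if i = j then (1 : ℝ) else 0)
    (G : M →ₗ[ℝ] M →ₗ[ℝ] ℝ) :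
    ∑ i, G (v i) (u i) = ∑ a, G (f a) (e a) := by
  calc ∑ i, G (v i) (u i)
      = ∑ i, G (v i) (∑ a, B (u i) (f a) • e a) := by
        refine Finset.sum_congr rfl fun i _ => ?_
        rw [repro B e f hef]
    _ = ∑ i, ∑ a, B (u i) (f a) * G (v i) (e a) := by
        simp [map_sum, map_smul, smul_eq_mul]
    _ = ∑ a, G (∑ i, B (f a) (u i) • v i) (e a) := by
        rw [Finset.sum_comm]
        simp [map_sum, LinearMap.sum_apply, map_smul, LinearMap.smul_apply, smul_eq_mul, hsymm]
    _ = ∑ a, G (f a) (e a) := by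
        refine Finset.sum_congr rfl fun a _ => ?_
        rw [repro B v u hvu]

lemma sum_mul_left' {ι : Type*} [Fintype ι] (s : ℝ) (g : ι → ℝ) :
    ∑ i, s * g i = s * ∑ i, g i := (Finset.mul_sum _ _ _).symm

lemma sum2_mul_left {ι κ : Type*} [Fintype ι] [Fintype κ] (s : ℝ) (p q : ι → κ → ℝ) :
    ∑ i, ∑ j, s * p i j * q i j = s * ∑ i, ∑ j, p i j * q i j := by
  rw [Finset.mul_sum]
  refine Finset.sum_congr rfl fun i _ => ?_
  rw [Finset.mul_sum]
  exact Finset.sum_congr rfl fun j _ => by ring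

lemma sum2_mul_right {ι κ : Type*} [Fintype ι] [Fintype κ] (s : ℝ) (p q : ι → κ → ℝ) :
    ∑ i, ∑ j, p i j * (s * q i j) = s * ∑ i, ∑ j, p i j * q i j := by
  rw [Finset.mul_sum]
  refine Finset.sum_congr rfl fun i _ => ?_
  rw [Finset.mul_sum]
  exact Finset.sum_congr rfl fun j _ => by ring


lemma fin7_cases (P : Fin 7 → Prop) (h0 : P 0) (h1 : P 1) (h2 : P 2) (h3 : P 3)
    (h4 : P 4) (h5 : P 5) (h6 : P 6) : ∀ i, P i := by
  have key : ∀ n (hn : n < 7), P ⟨n, hn⟩ := by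
    intro n hn
    interval_cases n
    exacts [h0, h1, h2, h3, h4, h5, h6]
  intro i
  obtain ⟨n, hn⟩ := i
  exact key n hn


set_option maxHeartbeats 4000000 in
/-- On the 7-dimensional nilpotent Lie algebra `75432:3`, the one-parameter family of
diagonal metrics with entries `(1, 1, 1, y, −y, y², y)` is Ricci-flat. -/
theorem one_parameter_family_ricci_flat_75432_3 {L : Type} [LieRing L] [LieAlgebra ℝ L]
    [LieRing.IsNilpotent L]
    (e : Module.Basis (Fin 7) ℝ L)
    (h01 : ⁅e 0, e 1⁆ = -e 2) (h02 : ⁅e 0, e 2⁆ = e 3)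
    (h03 : ⁅e 0, e 3⁆ = e 4) (h12 : ⁅e 1, e 2⁆ = e 4)
    (h04 : ⁅e 0, e 4⁆ = e 5) (h13 : ⁅e 1, e 3⁆ = e 5)
    (h14 : ⁅e 1, e 4⁆ = e 6) (h23 : ⁅e 2, e 3⁆ = e 6)
    (hzero : ∀ i j : Fin 7,
      (i, j) ∉ ([(0, 1), (0, 2), (0, 3), (1, 2), (0, 4), (1, 3), (1, 4), (2, 3)] :
        List (Fin 7 × Fin 7)) →
      (j, i) ∉ ([(0, 1), (0, 2), (0, 3), (1, 2), (0, 4), (1, 3), (1, 4), (2, 3)] :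
        List (Fin 7 × Fin 7)) →
      ⁅e i, e j⁆ = 0) :
    ∀ y : ℝ, y ≠ 0 →
      ∀ B : LinearMap.BilinForm ℝ L,
        (∀ i j, B (e i) (e j) = if i = j then
          ![1, 1, 1, y, -y, y ^ 2, y] i else 0) →
        RicciFlat B := by
  intro y hy B hB
  -- the metric-dual family of `e`
  set f : Fin 7 → L := fun a => (![1, 1, 1, y⁻¹, -y⁻¹, (y ^ 2)⁻¹, y⁻¹] a) • e a with hf
  have hg0 : (![1, 1, 1, y, -y, y ^ 2, y] : Fin 7 → ℝ) 0 = 1 := rfl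
  have hg1 : (![1, 1, 1, y, -y, y ^ 2, y] : Fin 7 → ℝ) 1 = 1 := rfl
  have hg2 : (![1, 1, 1, y, -y, y ^ 2, y] : Fin 7 → ℝ) 2 = 1 := rfl
  have hg3 : (![1, 1, 1, y, -y, y ^ 2, y] : Fin 7 → ℝ) 3 = y := rfl
  have hg4 : (![1, 1, 1, y, -y, y ^ 2, y] : Fin 7 → ℝ) 4 = -y := rfl
  have hg5 : (![1, 1, 1, y, -y, y ^ 2, y] : Fin 7 → ℝ) 5 = y ^ 2 := rfl
  have hg6 : (![1, 1, 1, y, -y, y ^ 2, y] : Fin 7 → ℝ) 6 = y := rfl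
  have hc0 : (![1, 1, 1, y⁻¹, -y⁻¹, (y ^ 2)⁻¹, y⁻¹] : Fin 7 → ℝ) 0 = 1 := rfl
  have hc1 : (![1, 1, 1, y⁻¹, -y⁻¹, (y ^ 2)⁻¹, y⁻¹] : Fin 7 → ℝ) 1 = 1 := rfl
  have hc2 : (![1, 1, 1, y⁻¹, -y⁻¹, (y ^ 2)⁻¹, y⁻¹] : Fin 7 → ℝ) 2 = 1 := rfl
  have hc3 : (![1, 1, 1, y⁻¹, -y⁻¹, (y ^ 2)⁻¹, y⁻¹] : Fin 7 → ℝ) 3 = y⁻¹ := rfl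
  have hc4 : (![1, 1, 1, y⁻¹, -y⁻¹, (y ^ 2)⁻¹, y⁻¹] : Fin 7 → ℝ) 4 = -y⁻¹ := rfl
  have hc5 : (![1, 1, 1, y⁻¹, -y⁻¹, (y ^ 2)⁻¹, y⁻¹] : Fin 7 → ℝ) 5 = (y ^ 2)⁻¹ := rfl
  have hc6 : (![1, 1, 1, y⁻¹, -y⁻¹, (y ^ 2)⁻¹, y⁻¹] : Fin 7 → ℝ) 6 = y⁻¹ := rfl
  -- symmetry of B
  have hsymm : ∀ x z, B x z = B z x := by
    have hBf : B = B.flip := by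
      refine e.ext fun i => e.ext fun j => ?_
      rcases eq_or_ne i j with rfl | h
      · simp
      · simp [LinearMap.flip_apply, hB, h, h.symm]
    intro x z
    conv_lhs => rw [hBf]
    simp [LinearMap.flip_apply]
  have hef : ∀ i j, B (e i) (f j) = if i = j then (1 : ℝ) else 0 := by
    intro i j
    simp only [hf, map_smul, smul_eq_mul, hB]
    rcases eq_or_ne i j with rfl | h
    · simp only [if_pos rfl]
      fin_cases i <;> simp [hy]
    · simp [h]
  intro ι _ _ v u hvu x z
  have key : ∀ (G : L →ₗ[ℝ] L →ₗ[ℝ] ℝ), ∑ i, G (v i) (u i) = ∑ a, G (f a) (e a) :=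
    fun G => sum_dualPair B hsymm v u hvu e f hef G
  -- rewrite the first Ricci sum via the standard basis
  have e1 : ∑ i, B ⁅x, v i⁆ ⁅z, u i⁆ = ∑ a, B ⁅x, f a⁆ ⁅z, e a⁆ := by
    have := key (LinearMap.mk₂ ℝ (fun p q => B ⁅x, p⁆ ⁅z, q⁆)
      (fun p p' q => by simp [lie_add, map_add])
      (fun s p q => by simp [lie_smul, map_smul])
      (fun p q q' => by simp [lie_add, map_add])
      (fun s p q => by simp [lie_smul, map_smul]))
    simpa using this
  -- rewrite the second Ricci sum via the standard basis
  have e2 : ∀ p r : L, ∑ j, B ⁅p, v j⁆ x * B ⁅r, u j⁆ z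
      = ∑ b, B ⁅p, f b⁆ x * B ⁅r, e b⁆ z := by
    intro p r
    have := key (LinearMap.mk₂ ℝ (fun q s => B ⁅p, q⁆ x * B ⁅r, s⁆ z)
      (fun q q' s => by simp [lie_add, map_add, LinearMap.add_apply]; ring)
      (fun t q s => by simp [lie_smul, map_smul, LinearMap.smul_apply, smul_eq_mul]; ring)
      (fun q s s' => by simp [lie_add, map_add, LinearMap.add_apply]; ring)
      (fun t q s => by simp [lie_smul, map_smul, LinearMap.smul_apply, smul_eq_mul]; ring))
    simpa using this
  have e3 : ∑ i, ∑ j, B ⁅v i, v j⁆ x * B ⁅u i, u j⁆ z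
      = ∑ a, ∑ b, B ⁅f a, f b⁆ x * B ⁅e a, e b⁆ z := by
    have step1 : ∑ i, ∑ j, B ⁅v i, v j⁆ x * B ⁅u i, u j⁆ z
        = ∑ i, ∑ b, B ⁅v i, f b⁆ x * B ⁅u i, e b⁆ z :=
      Finset.sum_congr rfl fun i _ => e2 (v i) (u i)
    rw [step1]
    have := key (LinearMap.mk₂ ℝ (fun p r => ∑ b, B ⁅p, f b⁆ x * B ⁅r, e b⁆ z)
      (fun p p' r => by
        simp only [add_lie, map_add, LinearMap.add_apply, add_mul, Finset.sum_add_distrib])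
      (fun s p r => by
        simp only [smul_lie, map_smul, LinearMap.smul_apply, smul_eq_mul, Finset.mul_sum,
          mul_assoc])
      (fun p r r' => by
        simp only [add_lie, map_add, LinearMap.add_apply, mul_add, Finset.sum_add_distrib])
      (fun s p r => by
        simp only [smul_lie, map_smul, LinearMap.smul_apply, smul_eq_mul, Finset.mul_sum]
        exact Finset.sum_congr rfl fun b _ => by ring))
    simpa using this
  show ricci B (⇑v) u x z = 0
  unfold ricci
  rw [e1, e3]
  -- now everything is expressed in the standard basis; bundle as a bilinear map in x, z
  have main : ∀ x z : L, (-(1 / 2 : ℝ) * ∑ a, B ⁅x, f a⁆ ⁅z, e a⁆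
      + (1 / 4 : ℝ) * ∑ a, ∑ b, B ⁅f a, f b⁆ x * B ⁅e a, e b⁆ z) = 0 := by
    have hz : ∀ a b : Fin 7, (-(1 / 2 : ℝ) * ∑ i, B ⁅e a, f i⁆ ⁅e b, e i⁆
        + (1 / 4 : ℝ) * ∑ i, ∑ j, B ⁅f i, f j⁆ (e a) * B ⁅e i, e j⁆ (e b)) = 0 := by
      have t00 : ⁅e 0, e 0⁆ = 0 := lie_self _
      have t01 : ⁅e 0, e 1⁆ = -e 2 := h01
      have t02 : ⁅e 0, e 2⁆ = e 3 := h02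
      have t03 : ⁅e 0, e 3⁆ = e 4 := h03
      have t04 : ⁅e 0, e 4⁆ = e 5 := h04
      have t05 : ⁅e 0, e 5⁆ = 0 := hzero 0 5 (by decide) (by decide)
      have t06 : ⁅e 0, e 6⁆ = 0 := hzero 0 6 (by decide) (by decide)
      have t10 : ⁅e 1, e 0⁆ = e 2 := by rw [← lie_skew, h01, neg_neg]
      have t11 : ⁅e 1, e 1⁆ = 0 := lie_self _
      have t12 : ⁅e 1, e 2⁆ = e 4 := h12
      have t13 : ⁅e 1, e 3⁆ = e 5 := h13
      have t14 : ⁅e 1, e 4⁆ = e 6 := h14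
      have t15 : ⁅e 1, e 5⁆ = 0 := hzero 1 5 (by decide) (by decide)
      have t16 : ⁅e 1, e 6⁆ = 0 := hzero 1 6 (by decide) (by decide)
      have t20 : ⁅e 2, e 0⁆ = -(e 3) := by rw [← lie_skew, h02]
      have t21 : ⁅e 2, e 1⁆ = -(e 4) := by rw [← lie_skew, h12]
      have t22 : ⁅e 2, e 2⁆ = 0 := lie_self _
      have t23 : ⁅e 2, e 3⁆ = e 6 := h23
      have t24 : ⁅e 2, e 4⁆ = 0 := hzero 2 4 (by decide) (by decide)
      have t25 : ⁅e 2, e 5⁆ = 0 := hzero 2 5 (by decide) (by decide)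
      have t26 : ⁅e 2, e 6⁆ = 0 := hzero 2 6 (by decide) (by decide)
      have t30 : ⁅e 3, e 0⁆ = -(e 4) := by rw [← lie_skew, h03]
      have t31 : ⁅e 3, e 1⁆ = -(e 5) := by rw [← lie_skew, h13]
      have t32 : ⁅e 3, e 2⁆ = -(e 6) := by rw [← lie_skew, h23]
      have t33 : ⁅e 3, e 3⁆ = 0 := lie_self _
      have t34 : ⁅e 3, e 4⁆ = 0 := hzero 3 4 (by decide) (by decide)
      have t35 : ⁅e 3, e 5⁆ = 0 := hzero 3 5 (by decide) (by decide)
      have t36 : ⁅e 3, e 6⁆ = 0 := hzero 3 6 (by decide) (by decide)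
      have t40 : ⁅e 4, e 0⁆ = -(e 5) := by rw [← lie_skew, h04]
      have t41 : ⁅e 4, e 1⁆ = -(e 6) := by rw [← lie_skew, h14]
      have t42 : ⁅e 4, e 2⁆ = 0 := hzero 4 2 (by decide) (by decide)
      have t43 : ⁅e 4, e 3⁆ = 0 := hzero 4 3 (by decide) (by decide)
      have t44 : ⁅e 4, e 4⁆ = 0 := lie_self _
      have t45 : ⁅e 4, e 5⁆ = 0 := hzero 4 5 (by decide) (by decide)
      have t46 : ⁅e 4, e 6⁆ = 0 := hzero 4 6 (by decide) (by decide)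
      have t50 : ⁅e 5, e 0⁆ = 0 := hzero 5 0 (by decide) (by decide)
      have t51 : ⁅e 5, e 1⁆ = 0 := hzero 5 1 (by decide) (by decide)
      have t52 : ⁅e 5, e 2⁆ = 0 := hzero 5 2 (by decide) (by decide)
      have t53 : ⁅e 5, e 3⁆ = 0 := hzero 5 3 (by decide) (by decide)
      have t54 : ⁅e 5, e 4⁆ = 0 := hzero 5 4 (by decide) (by decide)
      have t55 : ⁅e 5, e 5⁆ = 0 := lie_self _
      have t56 : ⁅e 5, e 6⁆ = 0 := hzero 5 6 (by decide) (by decide)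
      have t60 : ⁅e 6, e 0⁆ = 0 := hzero 6 0 (by decide) (by decide)
      have t61 : ⁅e 6, e 1⁆ = 0 := hzero 6 1 (by decide) (by decide)
      have t62 : ⁅e 6, e 2⁆ = 0 := hzero 6 2 (by decide) (by decide)
      have t63 : ⁅e 6, e 3⁆ = 0 := hzero 6 3 (by decide) (by decide)
      have t64 : ⁅e 6, e 4⁆ = 0 := hzero 6 4 (by decide) (by decide)
      have t65 : ⁅e 6, e 5⁆ = 0 := hzero 6 5 (by decide) (by decide)
      have t66 : ⁅e 6, e 6⁆ = 0 := lie_self _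
      refine fin7_cases _ ?_ ?_ ?_ ?_ ?_ ?_ ?_ <;>
        refine fin7_cases _ ?_ ?_ ?_ ?_ ?_ ?_ ?_ <;>
      · simp only [hf, Fin.sum_univ_seven, hc0, hc1, hc2, hc3, hc4, hc5, hc6,
          lie_smul, smul_lie, t00, t01, t02, t03, t04, t05, t06, t10, t11, t12, t13, t14, t15, t16, t20, t21, t22, t23, t24, t25, t26, t30, t31, t32, t33, t34, t35, t36, t40, t41, t42, t43, t44, t45, t46, t50, t51, t52, t53, t54, t55, t56, t60, t61, t62, t63, t64, t65, t66,
          smul_zero, smul_neg, neg_smul, map_smul, map_neg, map_zero, map_add,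
          LinearMap.smul_apply, LinearMap.neg_apply, LinearMap.zero_apply, LinearMap.add_apply,
          smul_eq_mul, hB, hg0, hg1, hg2, hg3, hg4, hg5, hg6, Fin.reduceEq, reduceIte,
          mul_ite, ite_mul, mul_zero, zero_mul, mul_one, one_mul, neg_neg, neg_zero, add_zero, zero_add]
        try norm_num
        try field_simp
        try ring
    set R : L →ₗ[ℝ] L →ₗ[ℝ] ℝ := LinearMap.mk₂ ℝ
      (fun x z => -(1 / 2 : ℝ) * ∑ a, B ⁅x, f a⁆ ⁅z, e a⁆
        + (1 / 4 : ℝ) * ∑ a, ∑ b, B ⁅f a, f b⁆ x * B ⁅e a, e b⁆ z)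
      (fun p p' q => by
        simp only [add_lie, map_add, LinearMap.add_apply, add_mul, Finset.sum_add_distrib]
        ring)
      (fun s p q => by
        simp only [smul_lie, map_smul, LinearMap.smul_apply, smul_eq_mul]
        rw [sum_mul_left', sum2_mul_left]
        ring)
      (fun p q q' => by
        simp only [add_lie, map_add, LinearMap.add_apply, mul_add, Finset.sum_add_distrib]
        ring)
      (fun s p q => by
        simp only [smul_lie, map_smul, LinearMap.smul_apply, smul_eq_mul]
        rw [sum_mul_left', sum2_mul_right]
        ring) with hRdef
    have hR0 : R = 0 := by
      refine e.ext fun a => e.ext fun b => ?_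
      simpa [hRdef, LinearMap.mk₂_apply] using hz a b
    intro x z
    have hx : R x z = 0 := by rw [hR0]; simp
    simpa [hRdef, LinearMap.mk₂_apply] using hx
  exact main x z
end
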